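/- arXiv:1305.3102 — 6 statements merged into one kernel-verified Lean document; each statement's English description precedes it below -/
import Mathlib

section
/- For any graph G and any positive integer k, the pathwidth of the inflation G ⋄ k satisfies pw(G ⋄ k) + 1 = k · (pw(G) + 1). -/
open SimpleGraph

/-- A path decomposition of a graph `G`: a finite sequence of bags covering all
vertices and edges, in which each vertex occurs in a consecutive set of bags. -/
structure PathDecomp {V : Type*} (G : SimpleGraph V) where
  n : ℕ
  bag : Fin n → Finset V
  mem_bag : ∀ v : V, ∃ i, v ∈ bag i
  adj_bag : ∀ u v : V, G.Adj u v → ∃ i, u ∈ bag i ∧ v ∈ bag i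
  convex : ∀ v : V, ∀ i j l : Fin n, i ≤ j → j ≤ l → v ∈ bag i → v ∈ bag l → v ∈ bag j

/-- The width of a path decomposition: maximum bag size minus one. -/
def PathDecomp.width {V : Type*} {G : SimpleGraph V} (P : PathDecomp G) : ℕ :=
  (Finset.univ.sup fun i => (P.bag i).card) - 1

/-- Pathwidth: the minimum width over all path decompositions. -/
noncomputable def pathwidth {V : Type*} (G : SimpleGraph V) : ℕ :=
  sInf {w | ∃ P : PathDecomp G, P.width = w}

/-- The inflation `G ⋄ k`: each vertex is replaced by a `k`-clique, with complete
connections between the cliques of adjacent vertices. -/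
def inflate {V : Type*} (G : SimpleGraph V) (k : ℕ) : SimpleGraph (V × Fin k) :=
  SimpleGraph.fromRel fun x y => x.1 = y.1 ∨ G.Adj x.1 y.1


lemma inflate_adj {V : Type*} {G : SimpleGraph V} {k : ℕ} {x y : V × Fin k} :
    (inflate G k).Adj x y ↔ x ≠ y ∧ (x.1 = y.1 ∨ G.Adj x.1 y.1) := by
  simp only [inflate, fromRel_adj]
  constructor
  · rintro ⟨h, (h2 | h2) | (h2 | h2)⟩
    exacts [⟨h, .inl h2⟩, ⟨h, .inr h2⟩, ⟨h, .inl h2.symm⟩, ⟨h, .inr h2.symm⟩]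
  · rintro ⟨h, h2⟩
    exact ⟨h, .inl h2⟩

namespace PathDecomp

variable {V : Type*} [Fintype V] {G : SimpleGraph V}

/-- The maximum bag size of a path decomposition. -/
def maxcard (P : PathDecomp G) : ℕ := Finset.univ.sup fun i => (P.bag i).card

lemma npos [Nonempty V] (P : PathDecomp G) : 0 < P.n := by
  obtain ⟨i, _⟩ := P.mem_bag (Classical.arbitrary V)
  exact i.pos

lemma one_le_maxcard [Nonempty V] (P : PathDecomp G) : 1 ≤ P.maxcard := by
  obtain ⟨i, hi⟩ := P.mem_bag (Classical.arbitrary V)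
  calc 1 ≤ (P.bag i).card := Finset.card_pos.2 ⟨_, hi⟩
    _ ≤ _ := Finset.le_sup (f := fun i => (P.bag i).card) (Finset.mem_univ i)

lemma width_add_one [Nonempty V] (P : PathDecomp G) : P.width + 1 = P.maxcard := by
  have := P.one_le_maxcard
  unfold width
  unfold maxcard at *
  omega

/-- Any clique is contained in some bag of a path decomposition. -/
lemma clique_subset_bag (P : PathDecomp G) (s : Finset V) (hs : s.Nonempty)
    (hc : ∀ u ∈ s, ∀ v ∈ s, u ≠ v → G.Adj u v) : ∃ i, ∀ v ∈ s, v ∈ P.bag i := by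
  classical
  set Sv : V → Finset (Fin P.n) := fun v => Finset.univ.filter fun i => v ∈ P.bag i with hSv
  have hS : ∀ v, (Sv v).Nonempty := fun v => by
    obtain ⟨i, hi⟩ := P.mem_bag v
    exact ⟨i, by simp [hSv, hi]⟩
  have hmem : ∀ v i, i ∈ Sv v ↔ v ∈ P.bag i := by simp [hSv]
  obtain ⟨w₀, hw₀s, hmax⟩ := s.exists_max_image (fun v => (Sv v).min' (hS v)) hs
  refine ⟨(Sv w₀).min' (hS w₀), fun v hv => ?_⟩
  have hvmin : v ∈ P.bag ((Sv v).min' (hS v)) := (hmem v _).1 ((Sv v).min'_mem _)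
  by_cases hvw : v = w₀
  · subst hvw; exact hvmin
  · obtain ⟨j, hvj, hwj⟩ := P.adj_bag v w₀ (hc v hv w₀ hw₀s hvw)
    have h1 : (Sv v).min' (hS v) ≤ (Sv w₀).min' (hS w₀) := hmax v hv
    have h2 : (Sv w₀).min' (hS w₀) ≤ j := Finset.min'_le _ _ ((hmem w₀ j).2 hwj)
    exact P.convex v _ _ j h1 h2 hvmin hvj

/-- The trivial path decomposition with a single bag. -/
def trivialD (G : SimpleGraph V) : PathDecomp G where
  n := 1
  bag _ := Finset.univ
  mem_bag v := ⟨0, Finset.mem_univ v⟩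
  adj_bag u v _ := ⟨0, Finset.mem_univ u, Finset.mem_univ v⟩
  convex _ _ _ _ _ _ _ _ := Finset.mem_univ _

/-- Inflating a path decomposition. -/
def inflateD (k : ℕ) (P : PathDecomp G) : PathDecomp (inflate G k) where
  n := P.n
  bag i := P.bag i ×ˢ Finset.univ
  mem_bag x := by
    obtain ⟨i, hi⟩ := P.mem_bag x.1
    exact ⟨i, Finset.mem_product.2 ⟨hi, Finset.mem_univ _⟩⟩
  adj_bag x y hxy := by
    rw [inflate_adj] at hxy
    obtain ⟨hne, h | h⟩ := hxy
    · obtain ⟨i, hi⟩ := P.mem_bag x.1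
      exact ⟨i, Finset.mem_product.2 ⟨hi, Finset.mem_univ _⟩,
        Finset.mem_product.2 ⟨h ▸ hi, Finset.mem_univ _⟩⟩
    · obtain ⟨i, hu, hv⟩ := P.adj_bag _ _ h
      exact ⟨i, Finset.mem_product.2 ⟨hu, Finset.mem_univ _⟩,
        Finset.mem_product.2 ⟨hv, Finset.mem_univ _⟩⟩
  convex x i j l hij hjl hi hl := by
    rw [Finset.mem_product] at *
    exact ⟨P.convex x.1 i j l hij hjl hi.1 hl.1, Finset.mem_univ _⟩

open scoped Classical in
/-- Projecting a path decomposition of an inflation: keep only vertices all of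
whose copies lie in the bag. -/
noncomputable def projectD {k : ℕ} (hk : 0 < k) (Q : PathDecomp (inflate G k)) : PathDecomp G where
  n := Q.n
  bag i := Finset.univ.filter fun v => ∀ a : Fin k, (v, a) ∈ Q.bag i
  mem_bag v := by
    classical
    obtain ⟨i, hi⟩ := Q.clique_subset_bag (Finset.univ.image fun a : Fin k => (v, a))
      ⟨(v, ⟨0, hk⟩), by simp⟩
      (by
        intro x hx y hy hxy
        simp only [Finset.mem_image, Finset.mem_univ, true_and] at hx hy
        obtain ⟨a, rfl⟩ := hx
        obtain ⟨b, rfl⟩ := hy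
        exact inflate_adj.2 ⟨hxy, .inl rfl⟩)
    refine ⟨i, Finset.mem_filter.2 ⟨Finset.mem_univ _, fun a => hi _ ?_⟩⟩
    simp
  adj_bag u v huv := by
    classical
    obtain ⟨i, hi⟩ := Q.clique_subset_bag
      ((Finset.univ.image fun a : Fin k => (u, a)) ∪ (Finset.univ.image fun a : Fin k => (v, a)))
      ⟨(u, ⟨0, hk⟩), by simp⟩
      (by
        intro x hx y hy hxy
        simp only [Finset.mem_union, Finset.mem_image, Finset.mem_univ, true_and] at hx hy
        refine inflate_adj.2 ⟨hxy, ?_⟩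
        obtain ⟨a, rfl⟩ | ⟨a, rfl⟩ := hx <;> obtain ⟨b, rfl⟩ | ⟨b, rfl⟩ := hy
        · exact .inl rfl
        · exact .inr huv
        · exact .inr huv.symm
        · exact .inl rfl)
    refine ⟨i, Finset.mem_filter.2 ⟨Finset.mem_univ _, fun a => hi _ ?_⟩,
      Finset.mem_filter.2 ⟨Finset.mem_univ _, fun a => hi _ ?_⟩⟩ <;> simp
  convex v i j l hij hjl hi hl := by
    simp only [Finset.mem_filter, Finset.mem_univ, true_and] at *
    exact fun a => Q.convex (v, a) i j l hij hjl (hi a) (hl a)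

end PathDecomp

/-- For any graph `G` and positive `k`, `pw(G ⋄ k) + 1 = k · (pw(G) + 1)`. -/
theorem pathwidth_inflate {V : Type*} [Fintype V] [Nonempty V]
    (G : SimpleGraph V) (k : ℕ) (hk : 0 < k) :
    pathwidth (inflate G k) + 1 = k * (pathwidth G + 1) := by
  classical
  haveI hne : Nonempty (V × Fin k) := ⟨(Classical.arbitrary V, ⟨0, hk⟩)⟩
  obtain ⟨P, hP⟩ : ∃ P : PathDecomp G, P.width = pathwidth G :=
    Nat.sInf_mem (⟨(PathDecomp.trivialD G).width, PathDecomp.trivialD G, rfl⟩ :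
      Set.Nonempty {w | ∃ P : PathDecomp G, P.width = w})
  obtain ⟨Q, hQ⟩ : ∃ Q : PathDecomp (inflate G k), Q.width = pathwidth (inflate G k) :=
    Nat.sInf_mem (⟨(PathDecomp.trivialD (inflate G k)).width, PathDecomp.trivialD (inflate G k),
      rfl⟩ : Set.Nonempty {w | ∃ Q : PathDecomp (inflate G k), Q.width = w})
  refine le_antisymm ?_ ?_
  · -- upper bound
    have h1 : pathwidth (inflate G k) ≤ (P.inflateD k).width := Nat.sInf_le ⟨_, rfl⟩
    have h2 : (P.inflateD k).width + 1 = (P.inflateD k).maxcard := (P.inflateD k).width_add_one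
    have h3 : (P.inflateD k).maxcard ≤ k * P.maxcard := by
      apply Finset.sup_le
      intro i _
      have hcard : ((P.inflateD k).bag i).card = (P.bag i).card * k := by
        simp [PathDecomp.inflateD]
      rw [hcard, mul_comm]
      exact Nat.mul_le_mul_left k
        (Finset.le_sup (f := fun i => (P.bag i).card) (Finset.mem_univ i))
    have h4 : P.width + 1 = P.maxcard := P.width_add_one
    calc pathwidth (inflate G k) + 1 ≤ (P.inflateD k).width + 1 := by omega
      _ = (P.inflateD k).maxcard := h2
      _ ≤ k * P.maxcard := h3
      _ = k * (pathwidth G + 1) := by rw [← h4, hP]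
  · -- lower bound
    set R := Q.projectD hk with hR
    have h1 : pathwidth G ≤ R.width := Nat.sInf_le ⟨R, rfl⟩
    have h2 : R.width + 1 = R.maxcard := R.width_add_one
    have h3 : k * R.maxcard ≤ Q.maxcard := by
      haveI : Nonempty (Fin R.n) := ⟨⟨0, R.npos⟩⟩
      obtain ⟨i, -, hi⟩ := Finset.exists_mem_eq_sup Finset.univ Finset.univ_nonempty
        (fun i => (R.bag i).card)
      have hsub : (R.bag i) ×ˢ (Finset.univ : Finset (Fin k)) ⊆ Q.bag i := by
        intro x hx
        rw [Finset.mem_product] at hx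
        have hx1 : ∀ a : Fin k, (x.1, a) ∈ Q.bag i := (Finset.mem_filter.mp hx.1).2
        exact hx1 x.2
      have hcard : k * (R.bag i).card ≤ (Q.bag i).card := by
        have := Finset.card_le_card hsub
        rw [Finset.card_product] at this
        simpa [mul_comm] using this
      have hi' : R.maxcard = (R.bag i).card := hi
      calc k * R.maxcard = k * (R.bag i).card := by rw [hi']
        _ ≤ (Q.bag i).card := hcard
        _ ≤ Q.maxcard := Finset.le_sup (f := fun i => (Q.bag i).card) (Finset.mem_univ i)
    have h4 : Q.width + 1 = Q.maxcard := Q.width_add_one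
    calc k * (pathwidth G + 1) ≤ k * (R.width + 1) := Nat.mul_le_mul_left k (by omega)
      _ = k * R.maxcard := by rw [h2]
      _ ≤ Q.maxcard := h3
      _ = Q.width + 1 := h4.symm
      _ = pathwidth (inflate G k) + 1 := by rw [hQ]
end

section
/- For any two finite graphs G₁ and G₂, the pathwidth of their join satisfies pw(G₁ ⊗ G₂) = min(pw(G₁) + |V(G₂)|, pw(G₂) + |V(G₁)|). -/
open SimpleGraph

/-- The join of two vertex-disjoint graphs: all edges of each graph, plus all
edges between the two vertex sets. -/
def graphJoin {V₁ V₂ : Type*} (G₁ : SimpleGraph V₁) (G₂ : SimpleGraph V₂) :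
    SimpleGraph (V₁ ⊕ V₂) :=
  SimpleGraph.fromRel fun x y =>
    (∃ a b, x = Sum.inl a ∧ y = Sum.inl b ∧ G₁.Adj a b) ∨
    (∃ a b, x = Sum.inr a ∧ y = Sum.inr b ∧ G₂.Adj a b) ∨
    (x.isLeft ∧ y.isRight)

namespace PathDecomp

variable {V : Type*} {G : SimpleGraph V} (P : PathDecomp G)

/-- The set of bags containing a vertex. -/
noncomputable def supp (v : V) : Finset (Fin P.n) := by
  classical exact Finset.univ.filter (fun i => v ∈ P.bag i)

lemma mem_supp {v : V} {i : Fin P.n} : i ∈ P.supp v ↔ v ∈ P.bag i := by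
  simp [supp]

lemma supp_nonempty (v : V) : (P.supp v).Nonempty := by
  obtain ⟨i, hi⟩ := P.mem_bag v
  exact ⟨i, (P.mem_supp).2 hi⟩

noncomputable def lo (v : V) : Fin P.n := (P.supp v).min' (P.supp_nonempty v)
noncomputable def hi (v : V) : Fin P.n := (P.supp v).max' (P.supp_nonempty v)

lemma lo_le {v : V} {i : Fin P.n} (h : v ∈ P.bag i) : P.lo v ≤ i :=
  Finset.min'_le _ _ ((P.mem_supp).2 h)

lemma le_hi {v : V} {i : Fin P.n} (h : v ∈ P.bag i) : i ≤ P.hi v :=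
  Finset.le_max' _ _ ((P.mem_supp).2 h)

lemma lo_mem (v : V) : v ∈ P.bag (P.lo v) := (P.mem_supp).1 (Finset.min'_mem _ _)
lemma hi_mem (v : V) : v ∈ P.bag (P.hi v) := (P.mem_supp).1 (Finset.max'_mem _ _)

lemma lo_le_hi (v : V) : P.lo v ≤ P.hi v := P.lo_le (P.hi_mem v)

lemma mem_of_between {v : V} {i : Fin P.n} (h1 : P.lo v ≤ i) (h2 : i ≤ P.hi v) :
    v ∈ P.bag i :=
  P.convex v _ i _ h1 h2 (P.lo_mem v) (P.hi_mem v)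

end PathDecomp

section JoinLemmas

variable {V₁ V₂ : Type*} (G₁ : SimpleGraph V₁) (G₂ : SimpleGraph V₂)

lemma graphJoin_adj_inl_inl {x x' : V₁} (h : G₁.Adj x x') :
    (graphJoin G₁ G₂).Adj (Sum.inl x) (Sum.inl x') := by
  simp [graphJoin, fromRel_adj, h.ne, h, h.symm]

lemma graphJoin_adj_inr_inr {y y' : V₂} (h : G₂.Adj y y') :
    (graphJoin G₁ G₂).Adj (Sum.inr y) (Sum.inr y') := by
  simp [graphJoin, fromRel_adj, h.ne, h, h.symm]

lemma graphJoin_adj_inl_inr (x : V₁) (y : V₂) :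
    (graphJoin G₁ G₂).Adj (Sum.inl x) (Sum.inr y) := by
  simp [graphJoin, fromRel_adj]

lemma adj_of_graphJoin_inl_inl {x x' : V₁}
    (h : (graphJoin G₁ G₂).Adj (Sum.inl x) (Sum.inl x')) : G₁.Adj x x' := by
  simp [graphJoin, fromRel_adj] at h
  exact h.2.elim id Adj.symm

lemma adj_of_graphJoin_inr_inr {y y' : V₂}
    (h : (graphJoin G₁ G₂).Adj (Sum.inr y) (Sum.inr y')) : G₂.Adj y y' := by
  simp [graphJoin, fromRel_adj] at h
  exact h.2.elim id Adj.symm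

end JoinLemmas

/-- The trivial path decomposition with a single bag containing all vertices. -/
def trivialDecomp {V : Type*} [Fintype V] (G : SimpleGraph V) : PathDecomp G where
  n := 1
  bag := fun _ => Finset.univ
  mem_bag := fun v => ⟨0, Finset.mem_univ v⟩
  adj_bag := fun u v _ => ⟨0, Finset.mem_univ u, Finset.mem_univ v⟩
  convex := fun v _ _ _ _ _ _ _ => Finset.mem_univ v

lemma pathDecomp_set_nonempty {V : Type*} [Fintype V] (G : SimpleGraph V) :
    {w | ∃ P : PathDecomp G, P.width = w}.Nonempty :=
  ⟨_, trivialDecomp G, rfl⟩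

lemma pathwidth_le_width {V : Type*} {G : SimpleGraph V} (P : PathDecomp G) :
    pathwidth G ≤ P.width :=
  Nat.sInf_le ⟨P, rfl⟩

lemma pathwidth_empty {V : Type*} [IsEmpty V] (G : SimpleGraph V) : pathwidth G = 0 := by
  have h : (⟨0, Fin.elim0, fun v => isEmptyElim v, fun u _ _ => isEmptyElim u,
      fun v => isEmptyElim v⟩ : PathDecomp G).width = 0 := by
    simp [PathDecomp.width]
  exact Nat.eq_zero_of_le_zero (h ▸ pathwidth_le_width _)

/-- Upper bound: add all of `V₂` to every bag of a decomposition of `G₁`. -/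
lemma pathwidth_join_le_left {V₁ V₂ : Type*} [Fintype V₁] [Fintype V₂]
    (G₁ : SimpleGraph V₁) (G₂ : SimpleGraph V₂) :
    pathwidth (graphJoin G₁ G₂) ≤ pathwidth G₁ + Fintype.card V₂ := by
  classical
  obtain ⟨Q, hQ⟩ := Nat.sInf_mem (pathDecomp_set_nonempty G₁)
  let Rbag : Fin (Q.n + 1) → Finset (V₁ ⊕ V₂) := fun i =>
    (if h : (i : ℕ) < Q.n then (Q.bag ⟨i, h⟩).map ⟨Sum.inl, Sum.inl_injective⟩ else ∅)
      ∪ Finset.univ.map ⟨Sum.inr, Sum.inr_injective⟩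
  have mem_inl : ∀ (x : V₁) (i : Fin (Q.n + 1)),
      Sum.inl x ∈ Rbag i ↔ ∃ h : (i : ℕ) < Q.n, x ∈ Q.bag ⟨i, h⟩ := by
    intro x i
    by_cases h : (i : ℕ) < Q.n <;> simp [Rbag, h]
  have mem_inr : ∀ (y : V₂) (i : Fin (Q.n + 1)), Sum.inr y ∈ Rbag i := by
    intro y i; simp [Rbag]
  let R : PathDecomp (graphJoin G₁ G₂) :=
  { n := Q.n + 1
    bag := Rbag
    mem_bag := by
      rintro (x | y)
      · obtain ⟨i, hi⟩ := Q.mem_bag x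
        exact ⟨⟨i.1, by omega⟩, (mem_inl x _).2 ⟨i.isLt, by simpa using hi⟩⟩
      · exact ⟨0, mem_inr y 0⟩
    adj_bag := by
      rintro (x | y) (x' | y') hadj
      · obtain ⟨i, h1, h2⟩ := Q.adj_bag _ _ (adj_of_graphJoin_inl_inl G₁ G₂ hadj)
        exact ⟨⟨i.1, by omega⟩, (mem_inl x _).2 ⟨i.isLt, by simpa using h1⟩,
          (mem_inl x' _).2 ⟨i.isLt, by simpa using h2⟩⟩
      · obtain ⟨i, hi⟩ := Q.mem_bag x
        exact ⟨⟨i.1, by omega⟩, (mem_inl x _).2 ⟨i.isLt, by simpa using hi⟩, mem_inr _ _⟩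
      · obtain ⟨i, hi⟩ := Q.mem_bag x'
        exact ⟨⟨i.1, by omega⟩, mem_inr _ _, (mem_inl x' _).2 ⟨i.isLt, by simpa using hi⟩⟩
      · exact ⟨0, mem_inr _ _, mem_inr _ _⟩
    convex := by
      rintro (x | y) i j l hij hjl hmi hml
      · rw [mem_inl] at hmi hml ⊢
        obtain ⟨hi', hmi⟩ := hmi
        obtain ⟨hl', hml⟩ := hml
        have hj' : (j : ℕ) < Q.n := lt_of_le_of_lt (Fin.le_def.1 hjl) hl'
        exact ⟨hj', Q.convex x ⟨i, hi'⟩ ⟨j, hj'⟩ ⟨l, hl'⟩ (Fin.mk_le_mk.2 (Fin.le_def.1 hij))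
          (Fin.mk_le_mk.2 (Fin.le_def.1 hjl)) hmi hml⟩
      · exact mem_inr y j }
  have hsup : (Finset.univ.sup fun i => (Rbag i).card)
      ≤ (Finset.univ.sup fun i => (Q.bag i).card) + Fintype.card V₂ := by
    refine Finset.sup_le fun i _ => ?_
    refine (Finset.card_union_le _ _).trans ?_
    have h1 : ((if h : (i : ℕ) < Q.n then (Q.bag ⟨i, h⟩).map ⟨Sum.inl, Sum.inl_injective⟩
        else ∅ : Finset (V₁ ⊕ V₂))).card ≤ Finset.univ.sup fun i => (Q.bag i).card := by
      by_cases h : (i : ℕ) < Q.n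
      · simp only [h, dif_pos, Finset.card_map]
        exact Finset.le_sup (f := fun i => (Q.bag i).card) (Finset.mem_univ (⟨i, h⟩ : Fin Q.n))
      · simp [h]
    have h2 : (Finset.univ.map ⟨Sum.inr, Sum.inr_injective⟩ : Finset (V₁ ⊕ V₂)).card
        = Fintype.card V₂ := by simp
    omega
  have hRw : R.width ≤ Q.width + Fintype.card V₂ := by
    have : R.width = (Finset.univ.sup fun i => (Rbag i).card) - 1 := rfl
    have hQw : Q.width = (Finset.univ.sup fun i => (Q.bag i).card) - 1 := rfl
    omega
  calc pathwidth (graphJoin G₁ G₂) ≤ R.width := pathwidth_le_width R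
    _ ≤ Q.width + Fintype.card V₂ := hRw
    _ = pathwidth G₁ + Fintype.card V₂ := by
      have hQ' : Q.width = pathwidth G₁ := hQ
      rw [hQ']

/-- Mirrored upper bound. -/
lemma pathwidth_join_le_right {V₁ V₂ : Type*} [Fintype V₁] [Fintype V₂]
    (G₁ : SimpleGraph V₁) (G₂ : SimpleGraph V₂) :
    pathwidth (graphJoin G₁ G₂) ≤ pathwidth G₂ + Fintype.card V₁ := by
  classical
  obtain ⟨Q, hQ⟩ := Nat.sInf_mem (pathDecomp_set_nonempty G₂)
  let Rbag : Fin (Q.n + 1) → Finset (V₁ ⊕ V₂) := fun i =>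
    (if h : (i : ℕ) < Q.n then (Q.bag ⟨i, h⟩).map ⟨Sum.inr, Sum.inr_injective⟩ else ∅)
      ∪ Finset.univ.map ⟨Sum.inl, Sum.inl_injective⟩
  have mem_inr : ∀ (y : V₂) (i : Fin (Q.n + 1)),
      Sum.inr y ∈ Rbag i ↔ ∃ h : (i : ℕ) < Q.n, y ∈ Q.bag ⟨i, h⟩ := by
    intro y i
    by_cases h : (i : ℕ) < Q.n <;> simp [Rbag, h]
  have mem_inl : ∀ (x : V₁) (i : Fin (Q.n + 1)), Sum.inl x ∈ Rbag i := by
    intro x i; simp [Rbag]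
  let R : PathDecomp (graphJoin G₁ G₂) :=
  { n := Q.n + 1
    bag := Rbag
    mem_bag := by
      rintro (x | y)
      · exact ⟨0, mem_inl x 0⟩
      · obtain ⟨i, hi⟩ := Q.mem_bag y
        exact ⟨⟨i.1, by omega⟩, (mem_inr y _).2 ⟨i.isLt, by simpa using hi⟩⟩
    adj_bag := by
      rintro (x | y) (x' | y') hadj
      · exact ⟨0, mem_inl _ _, mem_inl _ _⟩
      · obtain ⟨i, hi⟩ := Q.mem_bag y'
        exact ⟨⟨i.1, by omega⟩, mem_inl _ _, (mem_inr y' _).2 ⟨i.isLt, by simpa using hi⟩⟩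
      · obtain ⟨i, hi⟩ := Q.mem_bag y
        exact ⟨⟨i.1, by omega⟩, (mem_inr y _).2 ⟨i.isLt, by simpa using hi⟩, mem_inl _ _⟩
      · obtain ⟨i, h1, h2⟩ := Q.adj_bag _ _ (adj_of_graphJoin_inr_inr G₁ G₂ hadj)
        exact ⟨⟨i.1, by omega⟩, (mem_inr y _).2 ⟨i.isLt, by simpa using h1⟩,
          (mem_inr y' _).2 ⟨i.isLt, by simpa using h2⟩⟩
    convex := by
      rintro (x | y) i j l hij hjl hmi hml
      · exact mem_inl x j
      · rw [mem_inr] at hmi hml ⊢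
        obtain ⟨hi', hmi⟩ := hmi
        obtain ⟨hl', hml⟩ := hml
        have hj' : (j : ℕ) < Q.n := lt_of_le_of_lt (Fin.le_def.1 hjl) hl'
        exact ⟨hj', Q.convex y ⟨i, hi'⟩ ⟨j, hj'⟩ ⟨l, hl'⟩ (Fin.mk_le_mk.2 (Fin.le_def.1 hij))
          (Fin.mk_le_mk.2 (Fin.le_def.1 hjl)) hmi hml⟩ }
  have hsup : (Finset.univ.sup fun i => (Rbag i).card)
      ≤ (Finset.univ.sup fun i => (Q.bag i).card) + Fintype.card V₁ := by
    refine Finset.sup_le fun i _ => ?_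
    refine (Finset.card_union_le _ _).trans ?_
    have h1 : ((if h : (i : ℕ) < Q.n then (Q.bag ⟨i, h⟩).map ⟨Sum.inr, Sum.inr_injective⟩
        else ∅ : Finset (V₁ ⊕ V₂))).card ≤ Finset.univ.sup fun i => (Q.bag i).card := by
      by_cases h : (i : ℕ) < Q.n
      · simp only [h, dif_pos, Finset.card_map]
        exact Finset.le_sup (f := fun i => (Q.bag i).card) (Finset.mem_univ (⟨i, h⟩ : Fin Q.n))
      · simp [h]
    have h2 : (Finset.univ.map ⟨Sum.inl, Sum.inl_injective⟩ : Finset (V₁ ⊕ V₂)).card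
        = Fintype.card V₁ := by simp
    omega
  have hRw : R.width ≤ Q.width + Fintype.card V₁ := by
    have : R.width = (Finset.univ.sup fun i => (Rbag i).card) - 1 := rfl
    have hQw : Q.width = (Finset.univ.sup fun i => (Q.bag i).card) - 1 := rfl
    omega
  calc pathwidth (graphJoin G₁ G₂) ≤ R.width := pathwidth_le_width R
    _ ≤ Q.width + Fintype.card V₁ := hRw
    _ = pathwidth G₂ + Fintype.card V₁ := by
      have hQ' : Q.width = pathwidth G₂ := hQ
      rw [hQ']

/-- Key lower-bound lemma: if all of `V₂` sits in every bag of an index interval `[a, b]`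
and every `V₁`-interval meets `[a, b]`, then the width is at least `pw G₁ + |V₂|`. -/
lemma key_left {V₁ V₂ : Type*} [Fintype V₁] [Fintype V₂] [Nonempty V₁]
    (G₁ : SimpleGraph V₁) (G₂ : SimpleGraph V₂)
    (P : PathDecomp (graphJoin G₁ G₂)) (a b : Fin P.n) (hab : a ≤ b)
    (h₂ : ∀ (y : V₂) (j : Fin P.n), a ≤ j → j ≤ b → Sum.inr y ∈ P.bag j)
    (h₁ : ∀ x : V₁, P.lo (Sum.inl x) ≤ b ∧ a ≤ P.hi (Sum.inl x)) :
    pathwidth G₁ + Fintype.card V₂ ≤ P.width := by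
  classical
  set c : Fin P.n → Fin P.n := fun i => max a (min b i) with hc
  have hcmono : Monotone c := fun i j h => max_le_max le_rfl (min_le_min le_rfl h)
  have hca : ∀ i, a ≤ c i := fun i => le_max_left _ _
  have hcb : ∀ i, c i ≤ b := fun i => max_le hab (min_le_left _ _)
  have hcid : ∀ i, a ≤ i → i ≤ b → c i = i := by
    intro i ha hb
    simp [hc, min_eq_right hb, max_eq_right ha]
  let Qbag : Fin P.n → Finset V₁ := fun i =>
    Finset.univ.filter (fun x => Sum.inl x ∈ P.bag (c i))
  have mem_Qbag : ∀ (x : V₁) (i : Fin P.n), x ∈ Qbag i ↔ Sum.inl x ∈ P.bag (c i) := by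
    intro x i; simp [Qbag]
  let Q : PathDecomp G₁ :=
  { n := P.n
    bag := Qbag
    mem_bag := by
      intro x
      obtain ⟨hxb, hxa⟩ := h₁ x
      refine ⟨max a (P.lo (Sum.inl x)), (mem_Qbag _ _).2 ?_⟩
      rw [hcid _ (le_max_left _ _) (max_le hab hxb)]
      exact P.mem_of_between (le_max_right _ _) (max_le hxa (P.lo_le_hi _))
    adj_bag := by
      intro u v huv
      obtain ⟨q, hq1, hq2⟩ := P.adj_bag _ _ (graphJoin_adj_inl_inl G₁ G₂ huv)
      refine ⟨c q, (mem_Qbag _ _).2 ?_, (mem_Qbag _ _).2 ?_⟩ <;>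
        rw [hcid _ (hca q) (hcb q)]
      · exact P.mem_of_between (le_trans (le_min (h₁ u).1 (P.lo_le hq1)) (le_max_right a _))
          (max_le (h₁ u).2 (le_trans (min_le_right b q) (P.le_hi hq1)))
      · exact P.mem_of_between (le_trans (le_min (h₁ v).1 (P.lo_le hq2)) (le_max_right a _))
          (max_le (h₁ v).2 (le_trans (min_le_right b q) (P.le_hi hq2)))
    convex := by
      intro x i j l hij hjl hmi hml
      rw [mem_Qbag] at hmi hml ⊢
      exact P.convex _ _ _ _ (hcmono hij) (hcmono hjl) hmi hml }
  have hn : 0 < P.n := by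
    obtain ⟨i, _⟩ := P.mem_bag (Sum.inl (Classical.arbitrary V₁))
    exact i.pos
  have hneuniv : (Finset.univ : Finset (Fin P.n)).Nonempty := ⟨⟨0, hn⟩, Finset.mem_univ _⟩
  obtain ⟨istar, -, histar⟩ := Finset.exists_mem_eq_sup Finset.univ hneuniv
    (fun i => (Qbag i).card)
  have hsub : (Qbag istar).map ⟨Sum.inl, Sum.inl_injective⟩
      ∪ Finset.univ.map ⟨Sum.inr, Sum.inr_injective⟩ ⊆ P.bag (c istar) := by
    intro v hv
    rcases Finset.mem_union.1 hv with hv | hv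
    · obtain ⟨x, hx, rfl⟩ := Finset.mem_map.1 hv
      exact (mem_Qbag _ _).1 hx
    · obtain ⟨y, -, rfl⟩ := Finset.mem_map.1 hv
      exact h₂ y _ (hca istar) (hcb istar)
  have hdisj : Disjoint ((Qbag istar).map ⟨Sum.inl, Sum.inl_injective⟩)
      (Finset.univ.map (⟨Sum.inr, Sum.inr_injective⟩ : V₂ ↪ V₁ ⊕ V₂)) := by
    simp [Finset.disjoint_left]
  have hcard : (Qbag istar).card + Fintype.card V₂ ≤ (P.bag (c istar)).card := by
    have := Finset.card_le_card hsub
    rwa [Finset.card_union_of_disjoint hdisj, Finset.card_map, Finset.card_map,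
      Finset.card_univ] at this
  have hS : (Qbag istar).card + Fintype.card V₂
      ≤ Finset.univ.sup fun i => (P.bag i).card :=
    hcard.trans (Finset.le_sup (f := fun i => (P.bag i).card) (Finset.mem_univ (c istar)))
  have hQ1 : 1 ≤ Finset.univ.sup fun i => (Qbag i).card := by
    obtain ⟨i0, h0⟩ := Q.mem_bag (Classical.arbitrary V₁)
    calc 1 ≤ (Qbag i0).card := Finset.card_pos.2 ⟨_, h0⟩
      _ ≤ _ := Finset.le_sup (f := fun i => (Qbag i).card) (Finset.mem_univ i0)
  have hpw : pathwidth G₁ ≤ Q.width := pathwidth_le_width Q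
  have hQw : Q.width = (Finset.univ.sup fun i => (Qbag i).card) - 1 := rfl
  have hPw : P.width = (Finset.univ.sup fun i => (P.bag i).card) - 1 := rfl
  omega

/-- Mirrored key lemma. -/
lemma key_right {V₁ V₂ : Type*} [Fintype V₁] [Fintype V₂] [Nonempty V₂]
    (G₁ : SimpleGraph V₁) (G₂ : SimpleGraph V₂)
    (P : PathDecomp (graphJoin G₁ G₂)) (a b : Fin P.n) (hab : a ≤ b)
    (h₁ : ∀ (x : V₁) (j : Fin P.n), a ≤ j → j ≤ b → Sum.inl x ∈ P.bag j)
    (h₂ : ∀ y : V₂, P.lo (Sum.inr y) ≤ b ∧ a ≤ P.hi (Sum.inr y)) :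
    pathwidth G₂ + Fintype.card V₁ ≤ P.width := by
  classical
  set c : Fin P.n → Fin P.n := fun i => max a (min b i) with hc
  have hcmono : Monotone c := fun i j h => max_le_max le_rfl (min_le_min le_rfl h)
  have hca : ∀ i, a ≤ c i := fun i => le_max_left _ _
  have hcb : ∀ i, c i ≤ b := fun i => max_le hab (min_le_left _ _)
  have hcid : ∀ i, a ≤ i → i ≤ b → c i = i := by
    intro i ha hb
    simp [hc, min_eq_right hb, max_eq_right ha]
  let Qbag : Fin P.n → Finset V₂ := fun i =>
    Finset.univ.filter (fun y => Sum.inr y ∈ P.bag (c i))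
  have mem_Qbag : ∀ (y : V₂) (i : Fin P.n), y ∈ Qbag i ↔ Sum.inr y ∈ P.bag (c i) := by
    intro y i; simp [Qbag]
  let Q : PathDecomp G₂ :=
  { n := P.n
    bag := Qbag
    mem_bag := by
      intro y
      obtain ⟨hyb, hya⟩ := h₂ y
      refine ⟨max a (P.lo (Sum.inr y)), (mem_Qbag _ _).2 ?_⟩
      rw [hcid _ (le_max_left _ _) (max_le hab hyb)]
      exact P.mem_of_between (le_max_right _ _) (max_le hya (P.lo_le_hi _))
    adj_bag := by
      intro u v huv
      obtain ⟨q, hq1, hq2⟩ := P.adj_bag _ _ (graphJoin_adj_inr_inr G₁ G₂ huv)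
      refine ⟨c q, (mem_Qbag _ _).2 ?_, (mem_Qbag _ _).2 ?_⟩ <;>
        rw [hcid _ (hca q) (hcb q)]
      · exact P.mem_of_between (le_trans (le_min (h₂ u).1 (P.lo_le hq1)) (le_max_right a _))
          (max_le (h₂ u).2 (le_trans (min_le_right b q) (P.le_hi hq1)))
      · exact P.mem_of_between (le_trans (le_min (h₂ v).1 (P.lo_le hq2)) (le_max_right a _))
          (max_le (h₂ v).2 (le_trans (min_le_right b q) (P.le_hi hq2)))
    convex := by
      intro y i j l hij hjl hmi hml
      rw [mem_Qbag] at hmi hml ⊢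
      exact P.convex _ _ _ _ (hcmono hij) (hcmono hjl) hmi hml }
  have hn : 0 < P.n := by
    obtain ⟨i, _⟩ := P.mem_bag (Sum.inr (Classical.arbitrary V₂))
    exact i.pos
  have hneuniv : (Finset.univ : Finset (Fin P.n)).Nonempty := ⟨⟨0, hn⟩, Finset.mem_univ _⟩
  obtain ⟨istar, -, histar⟩ := Finset.exists_mem_eq_sup Finset.univ hneuniv
    (fun i => (Qbag i).card)
  have hsub : (Qbag istar).map ⟨Sum.inr, Sum.inr_injective⟩
      ∪ Finset.univ.map ⟨Sum.inl, Sum.inl_injective⟩ ⊆ P.bag (c istar) := by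
    intro v hv
    rcases Finset.mem_union.1 hv with hv | hv
    · obtain ⟨y, hy, rfl⟩ := Finset.mem_map.1 hv
      exact (mem_Qbag _ _).1 hy
    · obtain ⟨x, -, rfl⟩ := Finset.mem_map.1 hv
      exact h₁ x _ (hca istar) (hcb istar)
  have hdisj : Disjoint ((Qbag istar).map ⟨Sum.inr, Sum.inr_injective⟩)
      (Finset.univ.map (⟨Sum.inl, Sum.inl_injective⟩ : V₁ ↪ V₁ ⊕ V₂)) := by
    simp [Finset.disjoint_left]
  have hcard : (Qbag istar).card + Fintype.card V₁ ≤ (P.bag (c istar)).card := by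
    have := Finset.card_le_card hsub
    rwa [Finset.card_union_of_disjoint hdisj, Finset.card_map, Finset.card_map,
      Finset.card_univ] at this
  have hS : (Qbag istar).card + Fintype.card V₁
      ≤ Finset.univ.sup fun i => (P.bag i).card :=
    hcard.trans (Finset.le_sup (f := fun i => (P.bag i).card) (Finset.mem_univ (c istar)))
  have hQ1 : 1 ≤ Finset.univ.sup fun i => (Qbag i).card := by
    obtain ⟨i0, h0⟩ := Q.mem_bag (Classical.arbitrary V₂)
    calc 1 ≤ (Qbag i0).card := Finset.card_pos.2 ⟨_, h0⟩
      _ ≤ _ := Finset.le_sup (f := fun i => (Qbag i).card) (Finset.mem_univ i0)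
  have hpw : pathwidth G₂ ≤ Q.width := pathwidth_le_width Q
  have hQw : Q.width = (Finset.univ.sup fun i => (Qbag i).card) - 1 := rfl
  have hPw : P.width = (Finset.univ.sup fun i => (P.bag i).card) - 1 := rfl
  omega

/-- `pw(G₁ ⊗ G₂) = min(pw(G₁) + |V(G₂)|, pw(G₂) + |V(G₁)|)`. -/
theorem pathwidth_join {V₁ V₂ : Type*} [Fintype V₁] [Fintype V₂]
    (G₁ : SimpleGraph V₁) (G₂ : SimpleGraph V₂) :
    pathwidth (graphJoin G₁ G₂) =
      min (pathwidth G₁ + Fintype.card V₂) (pathwidth G₂ + Fintype.card V₁) := by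
  classical
  refine le_antisymm (le_min (pathwidth_join_le_left G₁ G₂) (pathwidth_join_le_right G₁ G₂)) ?_
  refine le_csInf (pathDecomp_set_nonempty _) ?_
  rintro w ⟨P, rfl⟩
  by_cases hV₁ : Nonempty V₁
  · by_cases hV₂ : Nonempty V₂
    · -- main case: both sides nonempty
      have cross₁ : ∀ (x : V₁) (y : V₂), P.lo (Sum.inl x) ≤ P.hi (Sum.inr y) := by
        intro x y
        obtain ⟨q, hq1, hq2⟩ := P.adj_bag _ _ (graphJoin_adj_inl_inr G₁ G₂ x y)
        exact (P.lo_le hq1).trans (P.le_hi hq2)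
      have cross₂ : ∀ (x : V₁) (y : V₂), P.lo (Sum.inr y) ≤ P.hi (Sum.inl x) := by
        intro x y
        obtain ⟨q, hq1, hq2⟩ := P.adj_bag _ _ (graphJoin_adj_inl_inr G₁ G₂ x y)
        exact (P.lo_le hq2).trans (P.le_hi hq1)
      set a := Finset.univ.sup' Finset.univ_nonempty (fun y : V₂ => P.lo (Sum.inr y)) with ha
      set b := Finset.univ.inf' Finset.univ_nonempty (fun y : V₂ => P.hi (Sum.inr y)) with hb
      rcases le_or_gt a b with hab | hab
      · refine le_trans (min_le_left _ _) (key_left G₁ G₂ P a b hab ?_ ?_)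
        · intro y j hj1 hj2
          exact P.mem_of_between
            ((Finset.le_sup' _ (Finset.mem_univ y)).trans hj1)
            (hj2.trans (Finset.inf'_le _ (Finset.mem_univ y)))
        · intro x
          exact ⟨Finset.le_inf' _ _ fun y _ => cross₁ x y,
            Finset.sup'_le _ _ fun y _ => cross₂ x y⟩
      · set a' := Finset.univ.sup' Finset.univ_nonempty (fun x : V₁ => P.lo (Sum.inl x)) with ha'
        set b' := Finset.univ.inf' Finset.univ_nonempty (fun x : V₁ => P.hi (Sum.inl x)) with hb'
        have h1 : a' ≤ b := Finset.sup'_le _ _ fun x _ =>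
          Finset.le_inf' _ _ fun y _ => cross₁ x y
        have h2 : a ≤ b' := Finset.le_inf' _ _ fun x _ =>
          Finset.sup'_le _ _ fun y _ => cross₂ x y
        have ha'b' : a' ≤ b' := h1.trans (hab.le.trans h2)
        refine le_trans (min_le_right _ _) (key_right G₁ G₂ P a' b' ha'b' ?_ ?_)
        · intro x j hj1 hj2
          exact P.mem_of_between
            ((Finset.le_sup' _ (Finset.mem_univ x)).trans hj1)
            (hj2.trans (Finset.inf'_le _ (Finset.mem_univ x)))
        · intro y
          exact ⟨Finset.le_inf' _ _ fun x _ => cross₂ x y,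
            Finset.sup'_le _ _ fun x _ => cross₁ x y⟩
    · -- V₂ empty
      have : IsEmpty V₂ := not_nonempty_iff.mp hV₂
      have hn : 0 < P.n := by
        obtain ⟨i, _⟩ := P.mem_bag (Sum.inl (Classical.arbitrary V₁))
        exact i.pos
      refine le_trans (min_le_left _ _) (key_left G₁ G₂ P ⟨0, hn⟩ ⟨P.n - 1, by omega⟩
        (Fin.mk_le_mk.2 (by omega)) (fun y => isEmptyElim y) ?_)
      intro x
      constructor
      · have := (P.lo (Sum.inl x)).isLt
        rw [Fin.le_def]
        simp only [Fin.val_mk]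
        omega
      · rw [Fin.le_def]
        simp
  · -- V₁ empty
    have hemp : IsEmpty V₁ := not_nonempty_iff.mp hV₁
    by_cases hV₂ : Nonempty V₂
    · have hn : 0 < P.n := by
        obtain ⟨i, _⟩ := P.mem_bag (Sum.inr (Classical.arbitrary V₂))
        exact i.pos
      refine le_trans (min_le_right _ _) (key_right G₁ G₂ P ⟨0, hn⟩ ⟨P.n - 1, by omega⟩
        (Fin.mk_le_mk.2 (by omega)) (fun x => isEmptyElim x) ?_)
      intro y
      constructor
      · have := (P.lo (Sum.inr y)).isLt
        rw [Fin.le_def]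
        simp only [Fin.val_mk]
        omega
      · rw [Fin.le_def]
        simp
    · have : IsEmpty V₂ := not_nonempty_iff.mp hV₂
      have h1 : pathwidth G₁ = 0 := pathwidth_empty G₁
      have h2 : Fintype.card V₂ = 0 := Fintype.card_eq_zero
      calc min (pathwidth G₁ + Fintype.card V₂) (pathwidth G₂ + Fintype.card V₁)
          ≤ pathwidth G₁ + Fintype.card V₂ := min_le_left _ _
        _ = 0 := by rw [h1, h2]
        _ ≤ P.width := Nat.zero_le _
end

section
/- For every graph G, the pathwidth of G equals the minimum over all interval supergraphs H of G (on the same vertex set) of ω(H) − 1, where ω(H) is the clique number of H. -/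
open SimpleGraph

/-- An interval graph: vertices can be assigned closed real intervals so that
distinct vertices are adjacent iff their intervals intersect. -/
def IsIntervalGraph {V : Type*} (G : SimpleGraph V) : Prop :=
  ∃ a b : V → ℝ, (∀ v, a v ≤ b v) ∧
    ∀ u v : V, u ≠ v →
      (G.Adj u v ↔ (Set.Icc (a u) (b u) ∩ Set.Icc (a v) (b v)).Nonempty)

/-- Direction 2: an interval supergraph yields a path decomposition of small width. -/
lemma exists_decomp_of_interval {V : Type*} [Fintype V] (G H : SimpleGraph V)
    (hGH : G ≤ H) (hH : IsIntervalGraph H) :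
    ∃ P : PathDecomp G, P.width ≤ H.cliqueNum - 1 := by
  classical
  obtain ⟨a, b, hab, hadj⟩ := hH
  set n := Fintype.card V with hn
  let e0 : Fin n ≃ V := (Fintype.equivFin V).symm
  let σ := Tuple.sort (a ∘ e0)
  let vtx : Fin n → V := fun i => e0 (σ i)
  let p : Fin n → ℝ := fun i => a (vtx i)
  have hp : Monotone p := Tuple.monotone_sort (a ∘ e0)
  let bg : Fin n → Finset V := fun i => Finset.univ.filter (fun u => a u ≤ p i ∧ p i ≤ b u)
  have hmem : ∀ u i, u ∈ bg i ↔ (a u ≤ p i ∧ p i ≤ b u) := by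
    intro u i; simp [bg]
  have hpv : ∀ v : V, p (σ.symm (e0.symm v)) = a v := by
    intro v; simp [p, vtx]
  refine ⟨⟨n, bg, ?_, ?_, ?_⟩, ?_⟩
  · intro v
    refine ⟨σ.symm (e0.symm v), ?_⟩
    rw [hmem, hpv]
    exact ⟨le_refl _, hab v⟩
  · intro u v huv
    have hne := huv.ne
    obtain ⟨x, hxu, hxv⟩ := (hadj u v hne).1 (hGH huv)
    rcases le_total (a u) (a v) with h | h
    · refine ⟨σ.symm (e0.symm v), ?_, ?_⟩
      · rw [hmem, hpv]; exact ⟨h, hxv.1.trans hxu.2⟩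
      · rw [hmem, hpv]; exact ⟨le_refl _, hab v⟩
    · refine ⟨σ.symm (e0.symm u), ?_, ?_⟩
      · rw [hmem, hpv]; exact ⟨le_refl _, hab u⟩
      · rw [hmem, hpv]; exact ⟨h, hxu.1.trans hxv.2⟩
  · intro v i j l hij hjl hi hl
    rw [hmem] at hi hl ⊢
    exact ⟨hi.1.trans (hp hij), (hp hjl).trans hl.2⟩
  · have hbag : ∀ i, (bg i).card ≤ H.cliqueNum := by
      intro i
      have hcl : H.IsClique (bg i) := by
        intro u hu w hw hne
        rw [Finset.mem_coe, hmem] at hu hw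
        exact (hadj u w hne).2 ⟨p i, ⟨hu.1, hu.2⟩, ⟨hw.1, hw.2⟩⟩
      exact IsClique.card_le_cliqueNum (tc := hcl)
    exact Nat.sub_le_sub_right (Finset.sup_le fun i _ => hbag i) 1

/-- Direction 1: a path decomposition yields an interval supergraph of small clique number. -/
lemma exists_interval_of_decomp {V : Type*} [Fintype V] (G : SimpleGraph V)
    (P : PathDecomp G) :
    ∃ H : SimpleGraph V, G ≤ H ∧ IsIntervalGraph H ∧ H.cliqueNum - 1 ≤ P.width := by
  classical
  let I : V → Finset (Fin P.n) := fun v => Finset.univ.filter (fun i => v ∈ P.bag i)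
  have hI : ∀ v, (I v).Nonempty := by
    intro v
    obtain ⟨i, hi⟩ := P.mem_bag v
    exact ⟨i, by simp [I, hi]⟩
  let lo : V → Fin P.n := fun v => (I v).min' (hI v)
  let hi : V → Fin P.n := fun v => (I v).max' (hI v)
  have hmemI : ∀ v i, i ∈ I v ↔ v ∈ P.bag i := by intro v i; simp [I]
  have hlo_mem : ∀ v, v ∈ P.bag (lo v) := fun v => (hmemI v _).1 (Finset.min'_mem _ _)
  have hhi_mem : ∀ v, v ∈ P.bag (hi v) := fun v => (hmemI v _).1 (Finset.max'_mem _ _)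
  have hlohi : ∀ v, lo v ≤ hi v := fun v => Finset.min'_le _ _ (Finset.max'_mem _ _)
  have hbetween : ∀ v (i : Fin P.n), lo v ≤ i → i ≤ hi v → v ∈ P.bag i := fun v i h1 h2 =>
    P.convex v (lo v) i (hi v) h1 h2 (hlo_mem v) (hhi_mem v)
  let H : SimpleGraph V := SimpleGraph.fromRel (fun u v => ∃ i, u ∈ P.bag i ∧ v ∈ P.bag i)
  have hHadj : ∀ u v, H.Adj u v ↔ u ≠ v ∧ ∃ i, u ∈ P.bag i ∧ v ∈ P.bag i := by
    intro u v
    constructor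
    · rintro ⟨hne, ⟨i, h1, h2⟩ | ⟨i, h1, h2⟩⟩
      exacts [⟨hne, i, h1, h2⟩, ⟨hne, i, h2, h1⟩]
    · rintro ⟨hne, i, h1, h2⟩
      exact ⟨hne, Or.inl ⟨i, h1, h2⟩⟩
  refine ⟨H, ?_, ?_, ?_⟩
  · intro u v huv
    exact (hHadj u v).2 ⟨huv.ne, P.adj_bag u v huv⟩
  · refine ⟨fun v => ((lo v : ℕ) : ℝ), fun v => ((hi v : ℕ) : ℝ), ?_, ?_⟩
    · intro v
      show ((lo v : ℕ) : ℝ) ≤ ((hi v : ℕ) : ℝ)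
      exact_mod_cast (hlohi v)
    · intro u v hne
      rw [hHadj]
      constructor
      · rintro ⟨-, i, h1, h2⟩
        have hu1 : lo u ≤ i := Finset.min'_le _ _ ((hmemI u i).2 h1)
        have hu2 : i ≤ hi u := Finset.le_max' _ _ ((hmemI u i).2 h1)
        have hv1 : lo v ≤ i := Finset.min'_le _ _ ((hmemI v i).2 h2)
        have hv2 : i ≤ hi v := Finset.le_max' _ _ ((hmemI v i).2 h2)
        refine ⟨((i : ℕ) : ℝ), ⟨?_, ?_⟩, ⟨?_, ?_⟩⟩
        · show ((lo u : ℕ) : ℝ) ≤ ((i : ℕ) : ℝ); exact_mod_cast hu1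
        · show ((i : ℕ) : ℝ) ≤ ((hi u : ℕ) : ℝ); exact_mod_cast hu2
        · show ((lo v : ℕ) : ℝ) ≤ ((i : ℕ) : ℝ); exact_mod_cast hv1
        · show ((i : ℕ) : ℝ) ≤ ((hi v : ℕ) : ℝ); exact_mod_cast hv2
      · rintro ⟨x, ⟨h1, h2⟩, ⟨h3, h4⟩⟩
        have h3' : ((lo v : ℕ) : ℝ) ≤ x := h3
        have h2' : x ≤ ((hi u : ℕ) : ℝ) := h2
        have h1' : ((lo u : ℕ) : ℝ) ≤ x := h1
        have h4' : x ≤ ((hi v : ℕ) : ℝ) := h4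
        have h5 : lo v ≤ hi u := by exact_mod_cast h3'.trans h2'
        have h6 : lo u ≤ hi v := by exact_mod_cast h1'.trans h4'
        refine ⟨hne, max (lo u) (lo v), ?_, ?_⟩
        · exact hbetween u _ (le_max_left _ _) (max_le (hlohi u) h5)
        · exact hbetween v _ (le_max_right _ _) (max_le h6 (hlohi v))
  · obtain ⟨s, hs⟩ := H.exists_isNClique_cliqueNum
    have hcard : s.card = H.cliqueNum := hs.card_eq
    have hkey : H.cliqueNum ≤ Finset.univ.sup fun i => (P.bag i).card := by
      rcases s.eq_empty_or_nonempty with rfl | hsne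
      · rw [← hcard]; simp
      · obtain ⟨u, hu, humax⟩ := s.exists_max_image lo hsne
        have hsub : s ⊆ P.bag (lo u) := by
          intro v hv
          by_cases hvu : v = u
          · subst hvu; exact hlo_mem v
          · obtain ⟨-, i, h1, h2⟩ := (hHadj v u).1 (hs.isClique hv hu hvu)
            have hui : lo u ≤ i := Finset.min'_le _ _ ((hmemI u i).2 h2)
            have hiv : i ≤ hi v := Finset.le_max' _ _ ((hmemI v i).2 h1)
            exact hbetween v (lo u) (humax v hv) (hui.trans hiv)
        calc H.cliqueNum = s.card := hcard.symm
          _ ≤ (P.bag (lo u)).card := Finset.card_le_card hsub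
          _ ≤ Finset.univ.sup (fun i => (P.bag i).card) :=
              Finset.le_sup (f := fun i => (P.bag i).card) (Finset.mem_univ _)
    exact Nat.sub_le_sub_right hkey 1

/-- The pathwidth of `G` equals the minimum of `ω(H) − 1` over all interval
supergraphs `H` of `G` on the same vertex set. -/
theorem pathwidth_eq_min_interval_supergraph {V : Type*} [Fintype V] (G : SimpleGraph V) :
    pathwidth G =
      sInf {w | ∃ H : SimpleGraph V, G ≤ H ∧ IsIntervalGraph H ∧ H.cliqueNum - 1 = w} := by
  classical
  have hLne : {w | ∃ P : PathDecomp G, P.width = w}.Nonempty := by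
    exact ⟨_, ⟨⟨1, fun _ => Finset.univ, fun v => ⟨0, Finset.mem_univ v⟩,
      fun u v _ => ⟨0, Finset.mem_univ u, Finset.mem_univ v⟩,
      fun _ _ _ _ _ _ _ _ => Finset.mem_univ _⟩, rfl⟩⟩
  have hRne : {w | ∃ H : SimpleGraph V, G ≤ H ∧ IsIntervalGraph H ∧
      H.cliqueNum - 1 = w}.Nonempty := by
    refine ⟨_, ⊤, le_top, ⟨fun _ => 0, fun _ => 1, fun _ => zero_le_one, ?_⟩, rfl⟩
    intro u v hne
    simp only [SimpleGraph.top_adj]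
    constructor
    · intro _
      exact ⟨0, by norm_num⟩
    · intro _
      exact hne
  apply le_antisymm
  · obtain ⟨H, hGH, hint, hw⟩ := Nat.sInf_mem hRne
    obtain ⟨P, hP⟩ := exists_decomp_of_interval G H hGH hint
    calc pathwidth G ≤ P.width := Nat.sInf_le ⟨P, rfl⟩
      _ ≤ H.cliqueNum - 1 := hP
      _ = _ := hw
  · obtain ⟨P, hP⟩ := Nat.sInf_mem hLne
    obtain ⟨H, hGH, hint, hw⟩ := exists_interval_of_decomp G P
    calc sInf {w | ∃ H : SimpleGraph V, G ≤ H ∧ IsIntervalGraph H ∧ H.cliqueNum - 1 = w}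
        ≤ H.cliqueNum - 1 := Nat.sInf_le ⟨H, hGH, hint, rfl⟩
      _ ≤ P.width := hw
      _ = pathwidth G := hP
end

section
/- For every k ≥ 0, the graph 𝕋̃^k (the complete ternary tree of height k with an extra pendant leaf attached to each of its 3^k original leaves) has pathwidth exactly k + 1. -/
open SimpleGraph

/-- Vertices of the graph `𝕋̃^k`: the complete ternary tree of height `k`
(addresses: lists over `Fin 3` of length ≤ `k`), together with one pendant
vertex per leaf (encoded as the leaf's address extended by `0`). -/
def TildeTVert (k : ℕ) : Type :=
  {l : List (Fin 3) // l.length ≤ k ∨ (l.length = k + 1 ∧ l.getLast? = some 0)}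

/-- The graph `𝕋̃^k`: the complete ternary tree of height `k` with an extra
pendant leaf attached to each of its `3^k` original leaves. Two vertices are
adjacent iff one's address extends the other's by one element. -/
def tildeT (k : ℕ) : SimpleGraph (TildeTVert k) :=
  SimpleGraph.fromRel fun x y => ∃ a : Fin 3, (y.1 : List (Fin 3)) = x.1 ++ [a]

/-! ### Auxiliary development -/

instance (k : ℕ) : DecidableEq (TildeTVert k) :=
  fun a b => decidable_of_iff (a.1 = b.1) Subtype.ext_iff.symm

/-- base-3 word of length `m` for number `i`, most significant digit first. -/
def wrd : ℕ → ℕ → List (Fin 3)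
  | 0, _ => []
  | m+1, i => wrd m (i / 3) ++ [⟨i % 3, Nat.mod_lt _ (by norm_num)⟩]

def tval (l : List (Fin 3)) : ℕ := l.foldl (fun n a => 3 * n + a.1) 0

lemma tval_append (l : List (Fin 3)) (a : Fin 3) : tval (l ++ [a]) = 3 * tval l + a.1 := by
  simp [tval, List.foldl_append]

lemma length_wrd (m i : ℕ) : (wrd m i).length = m := by
  induction m generalizing i with
  | zero => rfl
  | succ m ih => simp [wrd, ih]

lemma tval_wrd (m : ℕ) : ∀ i, i < 3 ^ m → tval (wrd m i) = i := by
  induction m with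
  | zero => intro i hi; interval_cases i; rfl
  | succ m ih =>
    intro i hi
    rw [wrd, tval_append, ih (i / 3) (by
      apply Nat.div_lt_of_lt_mul
      calc i < 3 ^ (m + 1) := hi
      _ = 3 * 3 ^ m := by ring)]
    simp only [Fin.val_mk]
    omega

lemma wrd_tval (l : List (Fin 3)) : wrd l.length (tval l) = l := by
  induction l using List.reverseRecOn with
  | nil => rfl
  | append_singleton l a ih =>
    have ha : (a : ℕ) < 3 := a.2
    rw [tval_append]
    simp only [List.length_append, List.length_singleton]
    rw [wrd]
    congr 1
    · rw [show (3 * tval l + a.1) / 3 = tval l by omega]; exact ih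
    · congr 1; exact Fin.ext (by simp)

lemma tval_lt (l : List (Fin 3)) : tval l < 3 ^ l.length := by
  induction l using List.reverseRecOn with
  | nil => simp [tval]
  | append_singleton l a ih =>
    have ha : (a : ℕ) < 3 := a.2
    rw [tval_append]
    simp only [List.length_append, List.length_singleton, pow_succ]
    omega

/-! ### The explicit path decomposition (upper bound) -/

def vert (k i m : ℕ) : TildeTVert k :=
  if h : m ≤ k then
    ⟨wrd m (i / 3 ^ (k - m)), Or.inl (by rw [length_wrd]; exact h)⟩
  else
    ⟨wrd k i ++ [0], Or.inr ⟨by simp [length_wrd], by simp⟩⟩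

def upBag (k : ℕ) (i : Fin (3 ^ k)) : Finset (TildeTVert k) :=
  (Finset.range (k + 2)).image (vert k i)

lemma mem_upBag_iff (k : ℕ) (i : Fin (3 ^ k)) (v : TildeTVert k) :
    v ∈ upBag k i ↔
      (v.1.length ≤ k ∧ (i : ℕ) / 3 ^ (k - v.1.length) = tval v.1) ∨
      (¬ v.1.length ≤ k ∧ (i : ℕ) = tval v.1.dropLast) := by
  constructor
  · intro hv
    simp only [upBag, Finset.mem_image, Finset.mem_range] at hv
    obtain ⟨m, hm, hvm⟩ := hv
    by_cases h : m ≤ k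
    · left
      have hval : v.1 = wrd m ((i : ℕ) / 3 ^ (k - m)) := by rw [← hvm]; simp [vert, h]
      have hlen : v.1.length = m := by rw [hval, length_wrd]
      have hdiv : (i : ℕ) / 3 ^ (k - m) < 3 ^ m := by
        apply Nat.div_lt_of_lt_mul
        calc (i : ℕ) < 3 ^ k := i.2
        _ = 3 ^ (k - m) * 3 ^ m := by rw [← pow_add]; congr 1; omega
      refine ⟨hlen ▸ h, ?_⟩
      rw [hlen, hval, tval_wrd _ _ hdiv]
    · right
      have hval : v.1 = wrd k i ++ [0] := by rw [← hvm]; simp [vert, h]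
      have hlen : v.1.length = k + 1 := by simp [hval, length_wrd]
      refine ⟨by omega, ?_⟩
      rw [hval]
      simp only [List.dropLast_concat]
      exact (tval_wrd k _ i.2).symm
  · intro hv
    simp only [upBag, Finset.mem_image, Finset.mem_range]
    rcases hv with ⟨h, hd⟩ | ⟨h, hd⟩
    · refine ⟨v.1.length, by omega, ?_⟩
      apply Subtype.ext
      simp [vert, h, hd, wrd_tval]
    · -- pendant
      rcases v.2 with h' | ⟨h1, h2⟩
      · exact absurd h' h
      have hne : v.1 ≠ [] := by intro hnil; rw [hnil] at h1; simp at h1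
      have hsplit : v.1.dropLast ++ [(0 : Fin 3)] = v.1 :=
        List.dropLast_append_getLast? _ h2
      refine ⟨k + 1, by omega, ?_⟩
      apply Subtype.ext
      simp [vert]
      have hlend : v.1.dropLast.length = k := by
        have : v.1.dropLast.length = v.1.length - 1 := List.length_dropLast; omega
      have hwv := wrd_tval (v.1.dropLast)
      rw [hlend] at hwv
      rw [hd, hwv]
      exact hsplit

def upDecomp (k : ℕ) : PathDecomp (tildeT k) where
  n := 3 ^ k
  bag := upBag k
  mem_bag := by
    intro v
    rcases v.2 with h | ⟨h1, h2⟩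
    · set m := v.1.length with hm
      have hlt : tval v.1 * 3 ^ (k - m) < 3 ^ k := by
        calc tval v.1 * 3 ^ (k - m) < 3 ^ m * 3 ^ (k - m) :=
          (Nat.mul_lt_mul_right (Nat.pow_pos (by norm_num))).mpr (tval_lt v.1)
        _ = 3 ^ k := by rw [← pow_add]; congr 1; omega
      refine ⟨⟨tval v.1 * 3 ^ (k - m), hlt⟩, ?_⟩
      rw [mem_upBag_iff]
      left
      refine ⟨h, ?_⟩
      exact Nat.mul_div_cancel _ (Nat.pow_pos (by norm_num))
    · have hlend : v.1.dropLast.length = k := by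
        have : v.1.dropLast.length = v.1.length - 1 := List.length_dropLast; omega
      refine ⟨⟨tval v.1.dropLast, by have := tval_lt v.1.dropLast; rw [hlend] at this; exact this⟩, ?_⟩
      rw [mem_upBag_iff]
      right
      exact ⟨by omega, rfl⟩
  adj_bag := by
    have key : ∀ (x y : TildeTVert k) (a : Fin 3), y.1 = x.1 ++ [a] →
        ∃ i, x ∈ upBag k i ∧ y ∈ upBag k i := by
      intro x y a hxy
      have hleny : y.1.length = x.1.length + 1 := by simp [hxy]
      have hvy : tval y.1 = 3 * tval x.1 + a.1 := by rw [hxy, tval_append]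
      have ha : (a : ℕ) < 3 := a.2
      rcases y.2 with h | ⟨h1, h2⟩
      · -- internal edge
        set m := y.1.length with hm
        have hlt : tval y.1 * 3 ^ (k - m) < 3 ^ k := by
          calc tval y.1 * 3 ^ (k - m) < 3 ^ m * 3 ^ (k - m) :=
            (Nat.mul_lt_mul_right (Nat.pow_pos (by norm_num))).mpr (tval_lt y.1)
          _ = 3 ^ k := by rw [← pow_add]; congr 1; omega
        refine ⟨⟨tval y.1 * 3 ^ (k - m), hlt⟩, ?_, ?_⟩
        · rw [mem_upBag_iff]; left
          refine ⟨by omega, ?_⟩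
          have hkm : k - x.1.length = (k - m) + 1 := by omega
          have hdd : tval y.1 * 3 ^ (k - m) / 3 ^ (k - m + 1) = tval y.1 / 3 := by
            rw [pow_succ, ← Nat.div_div_eq_div_mul,
              Nat.mul_div_cancel _ (Nat.pow_pos (by norm_num))]
          show tval y.1 * 3 ^ (k - m) / 3 ^ (k - x.1.length) = tval x.1
          rw [hkm, hdd]
          omega
        · rw [mem_upBag_iff]; left
          exact ⟨h, Nat.mul_div_cancel _ (Nat.pow_pos (by norm_num))⟩
      · -- pendant edge
        have hlenx : x.1.length = k := by omega
        have ha0 : a = 0 := by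
          rw [hxy] at h2; rw [List.getLast?_concat] at h2; exact (Option.some_inj.mp h2)
        refine ⟨⟨tval x.1, by have := tval_lt x.1; rw [hlenx] at this; exact this⟩, ?_, ?_⟩
        · rw [mem_upBag_iff]; left
          refine ⟨by omega, ?_⟩
          show tval x.1 / 3 ^ (k - x.1.length) = tval x.1
          rw [hlenx, Nat.sub_self, pow_zero, Nat.div_one]
        · rw [mem_upBag_iff]; right
          refine ⟨by omega, ?_⟩
          rw [hxy, ha0, List.dropLast_concat]
    intro u v huv
    rw [tildeT, SimpleGraph.fromRel_adj] at huv
    obtain ⟨hne, hrel | hrel⟩ := huv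
    · obtain ⟨a, ha⟩ := hrel
      exact key u v a ha
    · obtain ⟨a, ha⟩ := hrel
      obtain ⟨i, h1, h2⟩ := key v u a ha
      exact ⟨i, h2, h1⟩
  convex := by
    intro v i j l hij hjl hvi hvl
    rw [mem_upBag_iff] at hvi hvl ⊢
    rcases hvi with ⟨h, hdi⟩ | ⟨h, hdi⟩
    · rcases hvl with ⟨_, hdl⟩ | ⟨h', _⟩
      · left
        refine ⟨h, ?_⟩
        have h1 : (i : ℕ) / 3 ^ (k - v.1.length) ≤ (j : ℕ) / 3 ^ (k - v.1.length) :=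
          Nat.div_le_div_right hij
        have h2 : (j : ℕ) / 3 ^ (k - v.1.length) ≤ (l : ℕ) / 3 ^ (k - v.1.length) :=
          Nat.div_le_div_right hjl
        omega
      · exact absurd h h'
    · rcases hvl with ⟨h', _⟩ | ⟨_, hdl⟩
      · exact absurd h' h
      · right
        refine ⟨h, ?_⟩
        have : (i : ℕ) = (l : ℕ) := by omega
        have hjeq : (j : ℕ) = (i : ℕ) := by
          have : (i : ℕ) ≤ j := hij
          have : (j : ℕ) ≤ l := hjl
          omega
        omega

lemma upDecomp_width (k : ℕ) : (upDecomp k).width ≤ k + 1 := by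
  have h : (Finset.univ.sup fun i => ((upDecomp k).bag i).card) ≤ k + 2 := by
    apply Finset.sup_le
    intro i _
    calc ((upDecomp k).bag i).card ≤ (Finset.range (k + 2)).card := Finset.card_image_le
    _ = k + 2 := Finset.card_range _
  unfold PathDecomp.width
  omega

/-! ### Lower bound -/

lemma walk_hits {V : Type*} {G : SimpleGraph V} (P : PathDecomp G) {u v : V}
    (W : G.Walk u v) (j : Fin P.n) :
    ∀ (i l : Fin P.n), i ≤ j → j ≤ l → u ∈ P.bag i → v ∈ P.bag l →
      ∃ x ∈ W.support, x ∈ P.bag j := by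
  induction W with
  | nil =>
    intro i l hij hjl hu hv
    exact ⟨_, by simp, P.convex _ i j l hij hjl hu hv⟩
  | @cons u w v h W ih =>
    intro i l hij hjl hu hv
    obtain ⟨t, hut, hwt⟩ := P.adj_bag _ _ h
    by_cases hc : j ≤ t
    · exact ⟨u, by simp, P.convex _ i j t hij hc hu hut⟩
    · obtain ⟨x, hx, hxj⟩ := ih t l (le_of_not_ge hc) hjl hwt hv
      exact ⟨x, by simp [hx], hxj⟩

def treeRoot (k : ℕ) : TildeTVert k := ⟨[], Or.inl (Nat.zero_le _)⟩

lemma tree_walk (k : ℕ) (l : List (Fin 3)) :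
    ∀ (h : l.length ≤ k ∨ (l.length = k + 1 ∧ l.getLast? = some 0)),
      ∃ W : (tildeT k).Walk ⟨l, h⟩ (treeRoot k), ∀ x ∈ W.support, x.1 <+: l := by
  induction l using List.reverseRecOn with
  | nil =>
    intro h
    exact ⟨SimpleGraph.Walk.nil, by intro x hx; have hx : x = ⟨[], h⟩ := List.mem_singleton.mp hx; subst hx; exact List.prefix_refl _⟩
  | append_singleton l a ih =>
    intro h
    have hl : l.length ≤ k := by
      rcases h with h | ⟨h1, _⟩
      · simp at h; omega
      · simp at h1; omega
    obtain ⟨W, hW⟩ := ih (Or.inl hl)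
    have hadj : (tildeT k).Adj ⟨l ++ [a], h⟩ ⟨l, Or.inl hl⟩ := by
      refine (SimpleGraph.fromRel_adj _ _ _).mpr ?_
      refine ⟨?_, Or.inr ⟨a, rfl⟩⟩
      intro hc
      have := congrArg (fun x => (Subtype.val x : List (Fin 3)).length) hc
      simp at this
    refine ⟨SimpleGraph.Walk.cons hadj W, ?_⟩
    intro x hx
    have hx := List.mem_cons.mp hx
    rcases hx with rfl | hx
    · exact List.prefix_refl _
    · exact (hW x hx).trans ⟨[a], rfl⟩

def inc {k : ℕ} (c : Fin 3) (v : TildeTVert k) : TildeTVert (k + 1) :=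
  ⟨c :: v.1, by
    obtain ⟨l, hl⟩ := v
    rcases hl with h | ⟨h1, h2⟩
    · exact Or.inl (by simp; omega)
    · refine Or.inr ⟨by simp [h1], ?_⟩
      cases l with
      | nil => simp at h1
      | cons b t => rw [List.getLast?_cons_cons]; exact h2⟩

lemma inc_val {k : ℕ} (c : Fin 3) (v : TildeTVert k) : (inc c v).1 = c :: v.1 := rfl

lemma inc_inj {k : ℕ} (c : Fin 3) : Function.Injective (inc (k := k) c) := by
  intro x y h
  apply Subtype.ext
  have := congrArg Subtype.val h
  rw [inc_val, inc_val] at this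
  exact List.tail_eq_of_cons_eq this

lemma inc_adj {k : ℕ} (c : Fin 3) {x y : TildeTVert k} (h : (tildeT k).Adj x y) :
    (tildeT (k + 1)).Adj (inc c x) (inc c y) := by
  rw [tildeT, SimpleGraph.fromRel_adj] at h ⊢
  obtain ⟨hne, hr⟩ := h
  refine ⟨fun hc => hne (inc_inj c hc), ?_⟩
  rcases hr with ⟨a, ha⟩ | ⟨a, ha⟩
  · exact Or.inl ⟨a, by rw [inc_val, inc_val, ha]; rfl⟩
  · exact Or.inr ⟨a, by rw [inc_val, inc_val, ha]; rfl⟩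

lemma prefix_head {α : Type*} {y : List α} {c : α} {l : List α}
    (hp : y <+: c :: l) (hne : y ≠ []) : ∃ t, y = c :: t := by
  obtain ⟨t', ht'⟩ := hp
  cases h : y with
  | nil => exact absurd h hne
  | cons hd tl =>
    rw [h, List.cons_append] at ht'
    injection ht' with h1 h2
    exact ⟨tl, by simp [h, h1]⟩

lemma walk_map_mem {V V' : Type*} {G : SimpleGraph V} {G' : SimpleGraph V'} (F : G →g G')
    {u v : V} (p : G.Walk u v) {x : V'} (hx : x ∈ (p.map F).support) :
    ∃ y, y ∈ p.support ∧ F y = x := by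
  rw [SimpleGraph.Walk.support_map, List.mem_map] at hx; exact hx

theorem lb : ∀ (k : ℕ) {V : Type*} (G : SimpleGraph V) (f : TildeTVert k → V),
    Function.Injective f → (∀ x y, (tildeT k).Adj x y → G.Adj (f x) (f y)) →
    ∀ P : PathDecomp G, ∃ i, ∃ s : Finset (TildeTVert k),
      k + 2 ≤ s.card ∧ ∀ x ∈ s, f x ∈ P.bag i := by
  intro k
  induction k with
  | zero =>
    intro V G f hinj hadj P
    have hv0 : ([0] : List (Fin 3)).length = 0 + 1 ∧ ([0] : List (Fin 3)).getLast? = some 0 :=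
      ⟨rfl, rfl⟩
    have hadj0 : (tildeT 0).Adj ⟨[], Or.inl le_rfl⟩ ⟨[0], Or.inr hv0⟩ := by
      refine (SimpleGraph.fromRel_adj _ _ _).mpr ?_
      refine ⟨?_, Or.inl ⟨0, rfl⟩⟩
      intro hc
      have := congrArg (fun x => (Subtype.val x : List (Fin 3)).length) hc
      simp at this
    obtain ⟨i, h1, h2⟩ := P.adj_bag _ _ (hadj _ _ hadj0)
    refine ⟨i, {⟨[], Or.inl le_rfl⟩, ⟨[0], Or.inr hv0⟩}, ?_, ?_⟩
    · exact (Finset.card_pair (by intro hc; have := congrArg (fun x => (Subtype.val x : List (Fin 3)).length) hc; simp at this)).ge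
    · intro x hx
      rcases Finset.mem_insert.mp hx with rfl | hx
      · exact h1
      · have hx := Finset.mem_singleton.mp hx; subst hx; exact h2
  | succ k ih =>
    intro V G f hinj hadj P
    classical
    set r : TildeTVert (k + 1) := treeRoot (k + 1) with hr_def
    have H : ∀ c : Fin 3, ∃ i, ∃ s : Finset (TildeTVert k),
        k + 2 ≤ s.card ∧ ∀ x ∈ s, f (inc c x) ∈ P.bag i :=
      fun c => ih G (f ∘ inc c) (hinj.comp (inc_inj c))
        (fun x y h => hadj _ _ (inc_adj c h)) P
    choose idx s hcard hmem using H
    set A : Finset (Fin P.n) := Finset.univ.filter (fun i => f r ∈ P.bag i) with hA_def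
    have hAne : A.Nonempty := by
      obtain ⟨i, hi⟩ := P.mem_bag (f r)
      exact ⟨i, by simp [hA_def, hi]⟩
    set a := A.min' hAne with ha_def
    set b := A.max' hAne with hb_def
    have hab : a ≤ b := A.min'_le b (A.max'_mem hAne)
    have hmemA : ∀ i, f r ∈ P.bag i ↔ (a ≤ i ∧ i ≤ b) := by
      intro i
      constructor
      · intro h
        exact ⟨A.min'_le i (by simp [hA_def, h]), A.le_max' i (by simp [hA_def, h])⟩
      · rintro ⟨h1, h2⟩
        have hma := A.min'_mem hAne
        have hmb := A.max'_mem hAne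
        simp only [hA_def, Finset.mem_filter] at hma hmb
        exact P.convex _ a i b h1 h2 hma.2 hmb.2
    -- the graph hom
    let F : tildeT (k + 1) →g G := ⟨f, fun h => hadj _ _ h⟩
    -- helper to conclude in the off-interval case
    have conclude : ∀ (c1 c2 : Fin 3), c1 ≠ c2 →
        ∀ (y : TildeTVert (k+1)), (∃ t, y.1 = c1 :: t) → f y ∈ P.bag (idx c2) →
        ∃ i, ∃ s' : Finset (TildeTVert (k+1)),
          k + 3 ≤ s'.card ∧ ∀ x ∈ s', f x ∈ P.bag i := by
      intro c1 c2 hne y hy hybag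
      refine ⟨idx c2, insert y ((s c2).image (inc c2)), ?_, ?_⟩
      · have hynotmem : y ∉ (s c2).image (inc c2) := by
          rw [Finset.mem_image]
          rintro ⟨x, _, hx⟩
          obtain ⟨t, ht⟩ := hy
          have hv := congrArg Subtype.val hx
          rw [inc_val, ht] at hv
          have hcc : c2 = c1 := by injection hv
          exact hne hcc.symm
        rw [Finset.card_insert_of_notMem hynotmem,
          Finset.card_image_of_injective _ (inc_inj c2)]
        have := hcard c2
        omega
      · intro x hx
        rcases Finset.mem_insert.mp hx with rfl | hx
        · exact hybag
        · rw [Finset.mem_image] at hx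
          obtain ⟨z, hz, rfl⟩ := hx
          exact hmem c2 z hz
    by_cases hcase : ∃ c, a ≤ idx c ∧ idx c ≤ b
    · obtain ⟨c, hc1, hc2⟩ := hcase
      refine ⟨idx c, insert r ((s c).image (inc c)), ?_, ?_⟩
      · have hrnotmem : r ∉ (s c).image (inc c) := by
          rw [Finset.mem_image]
          rintro ⟨x, _, hx⟩
          have := congrArg Subtype.val hx
          rw [inc_val] at this
          simp [hr_def, treeRoot] at this
        rw [Finset.card_insert_of_notMem hrnotmem,
          Finset.card_image_of_injective _ (inc_inj c)]
        have := hcard c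
        omega
      · intro x hx
        rcases Finset.mem_insert.mp hx with rfl | hx
        · exact (hmemA (idx c)).mpr ⟨hc1, hc2⟩
        · rw [Finset.mem_image] at hx
          obtain ⟨z, hz, rfl⟩ := hx
          exact hmem c z hz
    · push_neg at hcase
      have hside : ∀ c, idx c < a ∨ b < idx c := by
        intro c
        by_cases h : a ≤ idx c
        · exact Or.inr (hcase c h)
        · exact Or.inl (lt_of_not_ge h)
      -- pigeonhole
      have hpig : ∃ c1 c2 : Fin 3, c1 ≠ c2 ∧
          ((idx c1 < a ∧ idx c2 < a) ∨ (b < idx c1 ∧ b < idx c2)) := by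
        rcases hside 0 with h0 | h0 <;> rcases hside 1 with h1 | h1 <;>
          rcases hside 2 with h2 | h2
        · exact ⟨0, 1, by decide, Or.inl ⟨h0, h1⟩⟩
        · exact ⟨0, 1, by decide, Or.inl ⟨h0, h1⟩⟩
        · exact ⟨0, 2, by decide, Or.inl ⟨h0, h2⟩⟩
        · exact ⟨1, 2, by decide, Or.inr ⟨h1, h2⟩⟩
        · exact ⟨1, 2, by decide, Or.inl ⟨h1, h2⟩⟩
        · exact ⟨0, 2, by decide, Or.inr ⟨h0, h2⟩⟩
        · exact ⟨0, 1, by decide, Or.inr ⟨h0, h1⟩⟩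
        · exact ⟨0, 1, by decide, Or.inr ⟨h0, h1⟩⟩
      -- order within the side
      have hpig' : ∃ c1 c2 : Fin 3, c1 ≠ c2 ∧
          ((idx c1 ≤ idx c2 ∧ idx c2 < a) ∨ (b < idx c2 ∧ idx c2 ≤ idx c1)) := by
        obtain ⟨c1, c2, hne, hs⟩ := hpig
        rcases hs with ⟨h1, h2⟩ | ⟨h1, h2⟩
        · rcases le_total (idx c1) (idx c2) with h | h
          · exact ⟨c1, c2, hne, Or.inl ⟨h, h2⟩⟩
          · exact ⟨c2, c1, hne.symm, Or.inl ⟨h, h1⟩⟩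
        · rcases le_total (idx c2) (idx c1) with h | h
          · exact ⟨c1, c2, hne, Or.inr ⟨h2, h⟩⟩
          · exact ⟨c2, c1, hne.symm, Or.inr ⟨h1, h⟩⟩
      obtain ⟨c1, c2, hne, hs⟩ := hpig'
      -- pick a vertex of subtree c1
      have hs1 : (s c1).Nonempty := Finset.card_pos.mp (by have := hcard c1; omega)
      obtain ⟨u, hu⟩ := hs1
      obtain ⟨W, hW⟩ := tree_walk (k + 1) (c1 :: u.1) (inc c1 u).2
      have hu_bag : f (inc c1 u) ∈ P.bag (idx c1) := hmem c1 u hu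
      rcases hs with ⟨h12, h2a⟩ | ⟨hb2, h21⟩
      · -- both below a
        have hr_bag : f r ∈ P.bag a := (hmemA a).mpr ⟨le_rfl, hab⟩
        obtain ⟨x, hxsup, hxbag⟩ := walk_hits P (W.map F) (idx c2) (idx c1) a
          h12 (le_of_lt h2a) hu_bag hr_bag
        have hxsup := walk_map_mem F W hxsup
        obtain ⟨y, hy, rfl⟩ := hxsup
        have hyne : y ≠ r := by
          rintro rfl
          have := (hmemA (idx c2)).mp hxbag
          exact absurd this.1 (not_le.mpr h2a)
        have hy1 : ∃ t, y.1 = c1 :: t :=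
          prefix_head (hW y hy) (fun h => hyne (Subtype.ext h))
        obtain ⟨i, s', hc', hm'⟩ := conclude c1 c2 hne y hy1 hxbag
        exact ⟨i, s', by omega, hm'⟩
      · -- both above b
        have hr_bag : f r ∈ P.bag b := (hmemA b).mpr ⟨hab, le_rfl⟩
        obtain ⟨x, hxsup, hxbag⟩ := walk_hits P (W.map F).reverse (idx c2) b (idx c1)
          (le_of_lt hb2) h21 hr_bag hu_bag
        have hxsup := walk_map_mem F W (by
          rw [SimpleGraph.Walk.support_reverse, List.mem_reverse] at hxsup; exact hxsup)
        obtain ⟨y, hy, rfl⟩ := hxsup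
        have hyne : y ≠ r := by
          rintro rfl
          have := (hmemA (idx c2)).mp hxbag
          exact absurd this.2 (not_le.mpr hb2)
        have hy1 : ∃ t, y.1 = c1 :: t :=
          prefix_head (hW y hy) (fun h => hyne (Subtype.ext h))
        obtain ⟨i, s', hc', hm'⟩ := conclude c1 c2 hne y hy1 hxbag
        exact ⟨i, s', by omega, hm'⟩

/-- For every `k ≥ 0`, `𝕋̃^k` has pathwidth exactly `k + 1`. -/
theorem pathwidth_tildeT (k : ℕ) : pathwidth (tildeT k) = k + 1 := by
  have hlow : ∀ w ∈ {w | ∃ P : PathDecomp (tildeT k), P.width = w}, k + 1 ≤ w := by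
    rintro w ⟨P, rfl⟩
    obtain ⟨i, s, hcard, hs⟩ := lb k (tildeT k) id Function.injective_id (fun _ _ h => h) P
    have hsub : s ⊆ P.bag i := fun x hx => hs x hx
    have hbig : k + 2 ≤ (P.bag i).card := le_trans hcard (Finset.card_le_card hsub)
    have hsup : k + 2 ≤ (Finset.univ.sup fun i => (P.bag i).card) :=
      le_trans hbig (Finset.le_sup (f := fun i => (P.bag i).card) (Finset.mem_univ i))
    unfold PathDecomp.width
    omega
  have hupw : (upDecomp k).width = k + 1 := by
    have h1 := upDecomp_width k
    have h2 := hlow (upDecomp k).width ⟨upDecomp k, rfl⟩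
    omega
  apply le_antisymm
  · exact Nat.sInf_le ⟨upDecomp k, hupw⟩
  · exact le_csInf ⟨(upDecomp k).width, ⟨upDecomp k, rfl⟩⟩ hlow
end

section
/- For every k ≥ 0, the graph 𝕋̃^k is a minor-minimal obstruction to pathwidth k: pw(𝕋̃^k) = k + 1, and every proper minor of 𝕋̃^k has pathwidth at most k. -/
open SimpleGraph

/-- A minor model of `H` in `G`: pairwise disjoint nonempty connected branch
sets, one per vertex of `H`, with an edge of `G` between the branch sets of any
two adjacent vertices of `H`. -/
structure MinorModel {V W : Type*} (G : SimpleGraph V) (H : SimpleGraph W) where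
  branch : W → Set V
  branch_nonempty : ∀ w, (branch w).Nonempty
  branch_disjoint : ∀ w w', w ≠ w' → Disjoint (branch w) (branch w')
  branch_connected : ∀ w, (G.induce (branch w)).Connected
  branch_adj : ∀ w w', H.Adj w w' → ∃ x ∈ branch w, ∃ y ∈ branch w', G.Adj x y

/-- `H` is a minor of `G`. -/
def IsMinor {V W : Type*} (H : SimpleGraph W) (G : SimpleGraph V) : Prop :=
  Nonempty (MinorModel G H)

/-- `H` is a proper minor of `G`: a minor that is not isomorphic to `G`. -/
def IsProperMinor {V W : Type*} (H : SimpleGraph W) (G : SimpleGraph V) : Prop :=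
  IsMinor H G ∧ IsEmpty (H ≃g G)

/-- `G` is a minor-minimal obstruction to pathwidth `k`: it has pathwidth
`k + 1` and every proper minor has pathwidth at most `k`. -/
def IsPWObstruction {V : Type*} (G : SimpleGraph V) (k : ℕ) : Prop :=
  pathwidth G = k + 1 ∧
    ∀ (W : Type) (H : SimpleGraph W), IsProperMinor H G → pathwidth H ≤ k


/-- A scoped list path-decomposition. -/
structure Good {V : Type*} (G : SimpleGraph V) (U : Set V) (bs : List (Finset V)) : Prop where
  cover : ∀ v ∈ U, ∃ B ∈ bs, v ∈ B
  subset : ∀ B ∈ bs, ∀ v ∈ B, v ∈ U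
  adjbag : ∀ u v, u ∈ U → v ∈ U → G.Adj u v → ∃ B ∈ bs, u ∈ B ∧ v ∈ B
  convex : ∀ v : V, ∀ i j l : ℕ, i ≤ j → j ≤ l →
      v ∈ bs.getD i ∅ → v ∈ bs.getD l ∅ → v ∈ bs.getD j ∅

namespace Good

variable {V : Type*} {G H : SimpleGraph V} {U U' U₁ U₂ : Set V} {as bs : List (Finset V)}

lemma lt_length {v : V} {i : ℕ} (h : v ∈ bs.getD i ∅) : i < bs.length := by
  by_contra hc
  rw [List.getD_eq_default _ _ (by omega)] at h
  simp at h

lemma getD_mem {i : ℕ} (h : i < bs.length) : bs.getD i ∅ ∈ bs := by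
  rw [List.getD_eq_getElem _ _ h]; exact List.getElem_mem h

lemma mem_getD {B : Finset V} (h : B ∈ bs) : ∃ i, i < bs.length ∧ bs.getD i ∅ = B := by
  obtain ⟨i, hi, rfl⟩ := List.mem_iff_getElem.1 h
  exact ⟨i, hi, List.getD_eq_getElem _ _ hi⟩

lemma mono (g : Good G U bs) (hle : ∀ u v, H.Adj u v → G.Adj u v) : Good H U bs :=
  { g with adjbag := fun u v hu hv h => g.adjbag u v hu hv (hle u v h) }

lemma congr_scope (g : Good G U bs) (h : U = U') : Good G U' bs := h ▸ g

/-- single bag -/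
lemma single (s : Finset V) (hne : s.Nonempty) : Good G (↑s) [s] where
  cover := fun v hv => ⟨s, by simp, hv⟩
  subset := fun B hB v hv => by simp at hB; subst hB; exact hv
  adjbag := fun u v hu hv h => ⟨s, by simp, hu, hv⟩
  convex := by
    intro v i j l hij hjl hi hl
    have hi' := lt_length hi
    have hl' := lt_length hl
    simp only [List.length_singleton] at hi' hl'
    interval_cases i <;> interval_cases l <;> interval_cases j <;> assumption

lemma reverse (g : Good G U bs) : Good G U bs.reverse where
  cover := fun v hv => by obtain ⟨B, hB, h⟩ := g.cover v hv; exact ⟨B, by simpa using hB, h⟩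
  subset := fun B hB => g.subset B (by simpa using hB)
  adjbag := fun u v hu hv h => by
    obtain ⟨B, hB, h1, h2⟩ := g.adjbag u v hu hv h; exact ⟨B, by simpa using hB, h1, h2⟩
  convex := by
    intro v i j l hij hjl hi hl
    have hi' := lt_length hi
    have hl' := lt_length hl
    rw [List.length_reverse] at hi' hl'
    have hrev : ∀ m : ℕ, m < bs.length → bs.reverse.getD m ∅ = bs.getD (bs.length - 1 - m) ∅ := by
      intro m hm
      rw [List.getD_eq_getElem _ _ (by simpa using hm), List.getElem_reverse,
        List.getD_eq_getElem _ _ (by omega)]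
    rw [hrev _ hi'] at hi
    rw [hrev _ hl'] at hl
    rw [hrev _ (by omega)]
    exact g.convex v _ _ _ (by omega) (by omega) hl hi

/-- insert a vertex into every bag -/
lemma insertAll [DecidableEq V] (g : Good G U bs) (r : V) (hne : bs ≠ [])
    (hU : ∀ u v, u ∈ insert r U → v ∈ insert r U → G.Adj u v → u = r ∨ v = r ∨ (u ∈ U ∧ v ∈ U)) :
    Good G (insert r U) (bs.map (insert r)) where
  cover := by
    intro v hv
    rcases hv with rfl | hv
    · obtain ⟨B, hB⟩ := List.exists_mem_of_ne_nil bs hne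
      exact ⟨insert v B, List.mem_map_of_mem hB, Finset.mem_insert_self _ _⟩
    · obtain ⟨B, hB, h⟩ := g.cover v hv
      exact ⟨insert r B, List.mem_map_of_mem hB, Finset.mem_insert_of_mem h⟩
  subset := by
    intro B hB v hv
    obtain ⟨B', hB', rfl⟩ := List.mem_map.1 hB
    rcases Finset.mem_insert.1 hv with rfl | hv
    · exact Set.mem_insert _ _
    · exact Set.mem_insert_of_mem _ (g.subset B' hB' v hv)
  adjbag := by
    intro u v hu hv hadj
    have key : ∀ a b : V, G.Adj a b → a = r → b ∈ insert r U →
        ∃ B ∈ bs.map (insert r), a ∈ B ∧ b ∈ B := by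
      intro a b hab har hb
      subst har
      have hbU : b ∈ U := by
        rcases hb with rfl | hb
        · exact absurd rfl hab.ne
        · exact hb
      obtain ⟨B, hB, h⟩ := g.cover b hbU
      exact ⟨insert a B, List.mem_map_of_mem hB, Finset.mem_insert_self _ _,
        Finset.mem_insert_of_mem h⟩
    rcases hU u v hu hv hadj with hur | hv' | ⟨hu', hv'⟩
    · exact key u v hadj hur hv
    · obtain ⟨B, hB, h1, h2⟩ := key v u hadj.symm hv' hu
      exact ⟨B, hB, h2, h1⟩
    · obtain ⟨B, hB, h1, h2⟩ := g.adjbag u v hu' hv' hadj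
      exact ⟨insert r B, List.mem_map_of_mem hB, Finset.mem_insert_of_mem h1,
        Finset.mem_insert_of_mem h2⟩
  convex := by
    intro v i j l hij hjl hi hl
    have hgd : ∀ m : ℕ, m < bs.length → (bs.map (insert r)).getD m ∅ = insert r (bs.getD m ∅) := by
      intro m hm
      rw [List.getD_eq_getElem _ _ (by simpa using hm), List.getElem_map,
        List.getD_eq_getElem _ _ hm]
    have hi' := lt_length hi
    have hl' := lt_length hl
    rw [List.length_map] at hi' hl'
    rw [hgd _ hi'] at hi
    rw [hgd _ hl'] at hl
    rw [hgd _ (by omega)]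
    by_cases hvr : v = r
    · subst hvr; exact Finset.mem_insert_self _ _
    · have hi2 : v ∈ bs.getD i ∅ := by
        rcases Finset.mem_insert.1 hi with h | h; · exact absurd h hvr
        exact h
      have hl2 : v ∈ bs.getD l ∅ := by
        rcases Finset.mem_insert.1 hl with h | h; · exact absurd h hvr
        exact h
      exact Finset.mem_insert_of_mem (g.convex v i j l hij hjl hi2 hl2)

end Good

namespace Good

variable {V : Type*} {G H : SimpleGraph V} {U U' U₁ U₂ : Set V} {as bs : List (Finset V)}

lemma mem_bags_iff {v : V} : (∃ i, v ∈ bs.getD i ∅) ↔ ∃ B ∈ bs, v ∈ B := by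
  constructor
  · rintro ⟨i, hi⟩
    exact ⟨_, getD_mem (lt_length hi), hi⟩
  · rintro ⟨B, hB, hv⟩
    obtain ⟨i, hi, rfl⟩ := mem_getD hB
    exact ⟨i, hv⟩

lemma append (g1 : Good G U₁ as) (g2 : Good G U₂ bs)
    (hcross : ∀ u v, G.Adj u v → u ∈ U₁ → v ∈ U₂ →
      (u ∈ U₁ ∧ v ∈ U₁) ∨ (u ∈ U₂ ∧ v ∈ U₂) ∨ ∃ B ∈ as ++ bs, u ∈ B ∧ v ∈ B)
    (hshare : ∀ v, (∃ i, v ∈ as.getD i ∅) → (∃ i, v ∈ bs.getD i ∅) →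
      v ∈ as.getD (as.length - 1) ∅ ∧ v ∈ bs.getD 0 ∅) :
    Good G (U₁ ∪ U₂) (as ++ bs) where
  cover := by
    intro v hv
    rcases hv with hv | hv
    · obtain ⟨B, hB, h⟩ := g1.cover v hv
      exact ⟨B, List.mem_append_left _ hB, h⟩
    · obtain ⟨B, hB, h⟩ := g2.cover v hv
      exact ⟨B, List.mem_append_right _ hB, h⟩
  subset := by
    intro B hB v hv
    rcases List.mem_append.1 hB with h | h
    · exact Or.inl (g1.subset B h v hv)
    · exact Or.inr (g2.subset B h v hv)
  adjbag := by
    have key : ∀ u v, G.Adj u v → u ∈ U₁ → v ∈ U₂ → ∃ B ∈ as ++ bs, u ∈ B ∧ v ∈ B := by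
      intro u v hadj hu hv
      rcases hcross u v hadj hu hv with ⟨h1, h2⟩ | ⟨h1, h2⟩ | h
      · obtain ⟨B, hB, hh⟩ := g1.adjbag u v h1 h2 hadj
        exact ⟨B, List.mem_append_left _ hB, hh⟩
      · obtain ⟨B, hB, hh⟩ := g2.adjbag u v h1 h2 hadj
        exact ⟨B, List.mem_append_right _ hB, hh⟩
      · exact h
    intro u v hu hv hadj
    rcases hu with hu | hu <;> rcases hv with hv | hv
    · obtain ⟨B, hB, hh⟩ := g1.adjbag u v hu hv hadj
      exact ⟨B, List.mem_append_left _ hB, hh⟩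
    · exact key u v hadj hu hv
    · obtain ⟨B, hB, h1, h2⟩ := key v u hadj.symm hv hu
      exact ⟨B, hB, h2, h1⟩
    · obtain ⟨B, hB, hh⟩ := g2.adjbag u v hu hv hadj
      exact ⟨B, List.mem_append_right _ hB, hh⟩
  convex := by
    intro v i j l hij hjl hi hl
    set L := as.length with hL
    have hl' := lt_length hl
    rw [List.length_append] at hl'
    by_cases hlL : l < L
    · -- everything inside as
      rw [List.getD_append _ _ _ _ (by omega)] at hi hl ⊢
      exact g1.convex v i j l hij hjl hi hl
    · by_cases hiL : i < L
      · -- straddling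
        rw [List.getD_append _ _ _ _ hiL] at hi
        rw [List.getD_append_right _ _ _ _ (by omega)] at hl
        have hsh := hshare v ⟨i, hi⟩ ⟨l - L, hl⟩
        by_cases hjL : j < L
        · rw [List.getD_append _ _ _ _ hjL]
          exact g1.convex v i j (L - 1) hij (by omega) hi hsh.1
        · rw [List.getD_append_right _ _ _ _ (by omega)]
          exact g2.convex v 0 (j - L) (l - L) (by omega) (by omega) hsh.2 hl
      · -- everything inside bs
        rw [List.getD_append_right _ _ _ _ (by omega)] at hi hl ⊢
        exact g2.convex v (i - L) (j - L) (l - L) (by omega) (by omega) hi hl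

end Good

namespace Good

variable {V : Type*} {G : SimpleGraph V} {U : Set V} {bs : List (Finset V)}

lemma map {V' : Type*} [DecidableEq V] {G' : SimpleGraph V'} (φ : V' → V)
    (hinj : Function.Injective φ)
    (hadj : ∀ u v, G.Adj (φ u) (φ v) ↔ G'.Adj u v) {U' : Set V'} {bs' : List (Finset V')}
    (g : Good G' U' bs') :
    Good G (φ '' U') (bs'.map (Finset.image φ)) where
  cover := by
    rintro v ⟨u, hu, rfl⟩
    obtain ⟨B, hB, h⟩ := g.cover u hu
    exact ⟨B.image φ, List.mem_map_of_mem hB, Finset.mem_image_of_mem _ h⟩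
  subset := by
    intro B hB v hv
    obtain ⟨B', hB', rfl⟩ := List.mem_map.1 hB
    obtain ⟨u, hu, rfl⟩ := Finset.mem_image.1 hv
    exact ⟨u, g.subset B' hB' u hu, rfl⟩
  adjbag := by
    rintro u v ⟨a, ha, rfl⟩ ⟨b, hb, rfl⟩ h
    obtain ⟨B, hB, h1, h2⟩ := g.adjbag a b ha hb ((hadj a b).1 h)
    exact ⟨B.image φ, List.mem_map_of_mem hB,
      Finset.mem_image_of_mem _ h1, Finset.mem_image_of_mem _ h2⟩
  convex := by
    have hgd : ∀ m : ℕ, (bs'.map (Finset.image φ)).getD m ∅ = (bs'.getD m ∅).image φ := by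
      intro m
      by_cases hm : m < bs'.length
      · rw [List.getD_eq_getElem _ _ (by simpa using hm), List.getElem_map,
          List.getD_eq_getElem _ _ hm]
      · rw [List.getD_eq_default _ _ (by simpa using hm), List.getD_eq_default _ _ (by omega)]
        simp
    intro v i j l hij hjl hi hl
    rw [hgd] at hi hl ⊢
    obtain ⟨a, ha, hav⟩ := Finset.mem_image.1 hi
    obtain ⟨b, hb, hbv⟩ := Finset.mem_image.1 hl
    have hba : b = a := hinj (hbv.trans hav.symm)
    subst hba
    exact hav ▸ Finset.mem_image_of_mem _ (g.convex b i j l hij hjl ha hb)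

/-- the interval property of bags meeting a connected set. -/
lemma connected_interval {S : Set V} (hconn : (G.induce S).Connected)
    (bag : ℕ → Finset V)
    (hadj : ∀ u v, u ∈ S → v ∈ S → G.Adj u v → ∃ i, u ∈ bag i ∧ v ∈ bag i)
    (hconv : ∀ v i j l, i ≤ j → j ≤ l → v ∈ bag i → v ∈ bag l → v ∈ bag j)
    {i j l : ℕ} (hij : i ≤ j) (hjl : j ≤ l)
    (hx : ∃ x ∈ S, x ∈ bag i) (hz : ∃ z ∈ S, z ∈ bag l) : ∃ y ∈ S, y ∈ bag j := by
  obtain ⟨x, hxS, hxi⟩ := hx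
  obtain ⟨z, hzS, hzl⟩ := hz
  suffices h : ∀ (a c : {v // v ∈ S}) (w : (G.induce S).Walk a c) (i : ℕ), i ≤ j →
      (a : V) ∈ bag i → (c : V) ∈ bag l → ∃ y ∈ S, y ∈ bag j by
    obtain ⟨w⟩ := hconn.preconnected ⟨x, hxS⟩ ⟨z, hzS⟩
    exact h _ _ w i hij hxi hzl
  intro a c w
  induction w with
  | nil =>
    intro i hi ha hc
    rename_i u
    exact ⟨u, u.2, hconv _ i j l hi hjl ha hc⟩
  | cons h p ih =>
    rename_i a b c
    intro i hi ha hc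
    have hab : G.Adj a b := by
      simpa [SimpleGraph.comap_adj] using h
    obtain ⟨s, hs1, hs2⟩ := hadj a b a.2 b.2 hab
    by_cases hsj : j ≤ s
    · exact ⟨a, a.2, hconv _ i j s hi hsj ha hs1⟩
    · exact ih s (by omega) hs2 hc

def toPathDecomp (g : Good G Set.univ bs) : PathDecomp G where
  n := bs.length
  bag i := bs.getD i ∅
  mem_bag := by
    intro v
    obtain ⟨B, hB, h⟩ := g.cover v trivial
    obtain ⟨i, hi, rfl⟩ := mem_getD hB
    exact ⟨⟨i, hi⟩, h⟩
  adj_bag := by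
    intro u v h
    obtain ⟨B, hB, h1, h2⟩ := g.adjbag u v trivial trivial h
    obtain ⟨i, hi, rfl⟩ := mem_getD hB
    exact ⟨⟨i, hi⟩, h1, h2⟩
  convex := by
    intro v i j l hij hjl hi hl
    exact g.convex v i j l hij hjl hi hl

lemma pathwidth_le (g : Good G Set.univ bs) {c : ℕ} (hc : ∀ B ∈ bs, B.card ≤ c) :
    pathwidth G ≤ c - 1 := by
  have h1 : pathwidth G ≤ (toPathDecomp g).width := Nat.sInf_le ⟨toPathDecomp g, rfl⟩
  refine h1.trans (Nat.sub_le_sub_right ?_ 1)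
  refine Finset.sup_le fun i _ => ?_
  by_cases hi : (i : ℕ) < bs.length
  · exact hc _ (getD_mem hi)
  · show ((bs.getD (i:ℕ) ∅).card) ≤ c
    rw [List.getD_eq_default _ _ (by omega)]
    simp

lemma mem_scope_of_bags (g : Good G U bs) {v : V} (h : ∃ i, v ∈ bs.getD i ∅) : v ∈ U := by
  obtain ⟨B, hB, hv⟩ := mem_bags_iff.1 h
  exact g.subset B hB v hv

end Good

namespace TT

open List SimpleGraph

variable {k : ℕ}

instance : DecidableEq (TildeTVert k) := by unfold TildeTVert; infer_instance

lemma vert_len (v : TildeTVert k) : v.1.length ≤ k + 1 := by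
  rcases v.2 with h | ⟨h, _⟩
  · omega
  · omega

def root (k : ℕ) : TildeTVert k := ⟨[], Or.inl (Nat.zero_le _)⟩

lemma eq_root_iff {v : TildeTVert k} : v = root k ↔ v.1 = [] := by
  constructor
  · rintro rfl; rfl
  · intro h; cases v; simp only [root]; congr

lemma adj_iff {x y : TildeTVert k} :
    (tildeT k).Adj x y ↔ (∃ a : Fin 3, y.1 = x.1 ++ [a]) ∨ (∃ a : Fin 3, x.1 = y.1 ++ [a]) := by
  unfold tildeT
  rw [SimpleGraph.fromRel_adj]
  constructor
  · rintro ⟨_, h⟩; exact h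
  · intro h
    refine ⟨?_, h⟩
    intro hxy
    rcases h with ⟨a, ha⟩ | ⟨a, ha⟩
    · rw [hxy] at ha
      have := congrArg List.length ha
      simp at this
    · rw [hxy] at ha
      have := congrArg List.length ha
      simp at this

lemma getLast?_cons_ne_nil {α : Type*} {l : List α} (a : α) (h : l ≠ []) :
    (a :: l).getLast? = l.getLast? := by
  cases l with
  | nil => simp at h
  | cons b t => exact List.getLast?_cons_cons ..

def push (a : Fin 3) (v : TildeTVert k) : TildeTVert (k + 1) :=
  ⟨a :: v.1, by
    rcases v.2 with h | ⟨h1, h2⟩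
    · exact Or.inl (by simp; omega)
    · refine Or.inr ⟨by simp [h1], ?_⟩
      rw [getLast?_cons_ne_nil _ (by intro hnil; rw [hnil] at h1; simp at h1)]
      exact h2⟩

lemma push_inj (a : Fin 3) : Function.Injective (push a : TildeTVert k → TildeTVert (k+1)) := by
  intro u v h
  have : (push a u).1 = (push a v).1 := by rw [h]
  simp only [push, List.cons.injEq] at this
  exact Subtype.ext this.2

def scope (a : Fin 3) : Set (TildeTVert (k + 1)) := {v | v.1.head? = some a}

lemma push_mem_scope (a : Fin 3) (v : TildeTVert k) : push a v ∈ (scope a : Set (TildeTVert (k+1))) := by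
  change (push a v).1.head? = some a
  simp [push, scope]

lemma scope_eq_range (a : Fin 3) :
    (push a : TildeTVert k → TildeTVert (k+1)) '' Set.univ = scope a := by
  apply Set.Subset.antisymm
  · rintro v ⟨u, -, rfl⟩
    exact push_mem_scope a u
  · intro v hv
    obtain ⟨t, ht⟩ : ∃ t, v.1 = a :: t := by
      simp only [scope, Set.mem_setOf_eq] at hv
      cases hl : v.1 with
      | nil => rw [hl] at hv; simp at hv
      | cons b t =>
        rw [hl] at hv
        simp only [List.head?_cons, Option.some.injEq] at hv
        exact ⟨t, by rw [hv]⟩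
    have hlen := vert_len v
    have htval : t.length ≤ k ∨ (t.length = k + 1 ∧ t.getLast? = some 0) := by
      rcases v.2 with h | ⟨h1, h2⟩
      · left; rw [ht] at h; simp only [List.length_cons] at h; omega
      · right
        rw [ht] at h1 h2
        simp only [List.length_cons] at h1
        refine ⟨by omega, ?_⟩
        rw [getLast?_cons_ne_nil _ (by intro hnil; subst hnil; simp at h1)] at h2
        exact h2
    exact ⟨⟨t, htval⟩, trivial, Subtype.ext ht.symm⟩

lemma push_adj (a : Fin 3) (u v : TildeTVert k) :
    (tildeT (k+1)).Adj (push a u) (push a v) ↔ (tildeT k).Adj u v := by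
  rw [adj_iff, adj_iff]
  simp only [push, List.cons_append, List.cons.injEq, true_and]

lemma vert_cases (v : TildeTVert (k+1)) : v = root (k+1) ∨ ∃ a : Fin 3, v ∈ scope a := by
  cases hl : v.1 with
  | nil => exact Or.inl (eq_root_iff.2 hl)
  | cons b t => exact Or.inr ⟨b, by simp [scope, hl]⟩

lemma scope_disj {a b : Fin 3} (hab : a ≠ b) {v : TildeTVert (k+1)} :
    v ∈ scope a → v ∈ scope b → False := by
  intro h1 h2
  simp only [scope, Set.mem_setOf_eq] at h1 h2
  rw [h1] at h2
  exact hab (Option.some.inj h2)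

lemma root_not_scope {a : Fin 3} : root (k+1) ∉ (scope a : Set (TildeTVert (k+1))) := by
  change ¬ (root (k+1)).1.head? = some a
  simp [scope, root]

lemma no_cross {a b : Fin 3} (hab : a ≠ b) {u v : TildeTVert (k+1)}
    (h : (tildeT (k+1)).Adj u v) (hu : u ∈ scope a) (hv : v ∈ scope b) : False := by
  simp only [scope, Set.mem_setOf_eq] at hu hv
  rcases adj_iff.1 h with ⟨c, hc⟩ | ⟨c, hc⟩
  · rw [hc] at hv
    cases hl : u.1 with
    | nil => rw [hl] at hu; simp at hu
    | cons d t =>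
      rw [hl] at hu hv
      simp at hu hv
      exact hab (hu.symm.trans hv)
  · rw [hc] at hu
    cases hl : v.1 with
    | nil => rw [hl] at hv; simp at hv
    | cons d t =>
      rw [hl] at hu hv
      simp at hu hv
      exact hab (hu.symm.trans hv)

lemma root_adj {v : TildeTVert (k+1)} (h : (tildeT (k+1)).Adj (root (k+1)) v) :
    ∃ a : Fin 3, v = push a (root k) := by
  rcases adj_iff.1 h with ⟨a, ha⟩ | ⟨a, ha⟩
  · exact ⟨a, Subtype.ext (by simp [push, root]; simpa [root] using ha)⟩
  · simp [root] at ha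

lemma adj_root_push (a : Fin 3) : (tildeT (k+1)).Adj (root (k+1)) (push a (root k)) := by
  rw [adj_iff]
  exact Or.inl ⟨a, by simp [push, root]⟩

def parent (v : TildeTVert k) : TildeTVert k :=
  ⟨v.1.dropLast, Or.inl (by have := vert_len v; simp; omega)⟩

lemma adj_parent {v : TildeTVert k} (h : v.1 ≠ []) : (tildeT k).Adj v (parent v) := by
  rw [adj_iff]
  exact Or.inr ⟨v.1.getLast h, (List.dropLast_append_getLast h).symm⟩

lemma prefix_closed_connected {S : Set (TildeTVert k)} (hroot : root k ∈ S)
    (hcl : ∀ v ∈ S, parent v ∈ S) : ((tildeT k).induce S).Connected := by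
  have key : ∀ n : ℕ, ∀ v : TildeTVert k, v.1.length ≤ n → ∀ hv : v ∈ S,
      ((tildeT k).induce S).Reachable ⟨v, hv⟩ ⟨root k, hroot⟩ := by
    intro n
    induction n with
    | zero =>
      intro v hlen hv
      have : v = root k := eq_root_iff.2 (List.length_eq_zero_iff.1 (by omega))
      subst this
      rfl
    | succ n ih =>
      intro v hlen hv
      by_cases hnil : v.1 = []
      · have : v = root k := eq_root_iff.2 hnil
        subst this
        rfl
      · have hadj : ((tildeT k).induce S).Adj ⟨v, hv⟩ ⟨parent v, hcl v hv⟩ := by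
          simp only [SimpleGraph.comap_adj]
          exact adj_parent hnil
        have hplen : (parent v).1.length ≤ n := by
          simp only [parent, List.length_dropLast]
          have : v.1.length ≥ 1 := List.length_pos_iff.2 hnil
          omega
        exact hadj.reachable.trans (ih (parent v) hplen _)
  rw [SimpleGraph.connected_iff]
  exact ⟨fun x y => (key _ x (le_refl _) x.2).trans (key _ y (le_refl _) y.2).symm,
    ⟨⟨root k, hroot⟩⟩⟩

end TT

namespace TT

open List SimpleGraph Good

variable {k : ℕ}

lemma getD_map_image {V V' : Type*} [DecidableEq V] (φ : V' → V) (bs : List (Finset V')) (m : ℕ) :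
    (bs.map (Finset.image φ)).getD m ∅ = (bs.getD m ∅).image φ := by
  by_cases hm : m < bs.length
  · rw [List.getD_eq_getElem _ _ (by simpa using hm), List.getElem_map,
      List.getD_eq_getElem _ _ hm]
  · rw [List.getD_eq_default _ _ (by simpa using hm), List.getD_eq_default _ _ (by omega)]
    simp

lemma getD_map_insert {V : Type*} [DecidableEq V] (r : V) (bs : List (Finset V)) {m : ℕ}
    (hm : m < bs.length) : (bs.map (insert r)).getD m ∅ = insert r (bs.getD m ∅) := by
  rw [List.getD_eq_getElem _ _ (by simpa using hm), List.getElem_map,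
    List.getD_eq_getElem _ _ hm]

lemma getD_reverse {V : Type*} (bs : List (Finset V)) {m : ℕ} (hm : m < bs.length) :
    bs.reverse.getD m ∅ = bs.getD (bs.length - 1 - m) ∅ := by
  rw [List.getD_eq_getElem _ _ (by simpa using hm), List.getElem_reverse,
    List.getD_eq_getElem _ _ (by omega)]

lemma push_ne_root (a : Fin 3) (v : TildeTVert k) : push a v ≠ root (k+1) := by
  intro h
  have := congrArg (fun w => (Subtype.val w : List (Fin 3))) h
  simp [push, root] at this

lemma fin3_cases {a b c : Fin 3} (hab : a ≠ b) (hac : a ≠ c) (hbc : b ≠ c) (d : Fin 3) :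
    d = a ∨ d = b ∨ d = c := by
  revert hab hac hbc
  revert a b c d
  decide

section Glue

variable {G' : SimpleGraph (TildeTVert (k+1))}

/-- Gluing two end-rooted side blocks and a middle block around the root. -/
lemma glueTree (hle : ∀ u v, G'.Adj u v → (tildeT (k+1)).Adj u v) {a b c : Fin 3} (hab : a ≠ b) (hac : a ≠ c) (hbc : b ≠ c)
    (hra : G'.Adj (root (k+1)) (push a (root k)))
    (hrb : G'.Adj (root (k+1)) (push b (root k)))
    {As Bs ms : List (Finset (TildeTVert (k+1)))}
    (gA : Good G' (scope a) As) (hAne : As ≠ [])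
    (hAlast : As.getD (As.length - 1) ∅ = {push a (root k)})
    (gB : Good G' (scope b) Bs) (hBne : Bs ≠ [])
    (hBlast : Bs.getD (Bs.length - 1) ∅ = {push b (root k)})
    (gm : Good G' (scope c) ms) (hmne : ms ≠ []) :
    Good G' Set.univ
      (As ++ ([{push a (root k), root (k+1)}] ++
        ((ms.map (insert (root (k+1)))) ++
          ([{root (k+1), push b (root k)}] ++ Bs.reverse)))) := by
  set r := root (k+1) with hr
  set pa := push a (root k) with hpa
  set pb := push b (root k) with hpb
  have hrsc : ∀ d : Fin 3, r ∉ (scope d : Set (TildeTVert (k+1))) := fun d => root_not_scope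
  have hpamem : pa ∈ (scope a : Set (TildeTVert (k+1))) := push_mem_scope a _
  have hpbmem : pb ∈ (scope b : Set (TildeTVert (k+1))) := push_mem_scope b _
  -- adjacency from r classification
  have hradj : ∀ v : TildeTVert (k+1), G'.Adj r v → ∃ d, v = push d (root k) :=
    fun v h => root_adj (hle _ _ h)
  -- block 5 : Bs.reverse
  have g5 : Good G' (scope b) Bs.reverse := gB.reverse
  -- block 4 : [{r, pb}]
  have g4 : Good G' (↑({r, pb} : Finset (TildeTVert (k+1)))) [{r, pb}] :=
    Good.single _ ⟨r, Finset.mem_insert_self _ _⟩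
  -- block 45
  have g45 : Good G' (↑({r, pb} : Finset (TildeTVert (k+1))) ∪ scope b)
      ([{r, pb}] ++ Bs.reverse) := by
    refine g4.append g5 ?_ ?_
    · intro u v hadj hu hv
      simp only [Finset.coe_insert, Finset.coe_singleton, Set.mem_insert_iff,
        Set.mem_singleton_iff] at hu
      rcases hu with rfl | rfl
      · obtain ⟨d, rfl⟩ := hradj v hadj
        have : d = b := by
          by_contra hdb
          exact scope_disj hdb (push_mem_scope d _) hv
        subst this
        exact Or.inr (Or.inr ⟨{r, pb}, by simp, by simp, by simp [hpb]⟩)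
      · exact Or.inr (Or.inl ⟨hpbmem, hv⟩)
    · intro v hv1 hv2
      have hvb : v ∈ (scope b : Set _) := g5.mem_scope_of_bags hv2
      have hv1' : v ∈ ({r, pb} : Finset (TildeTVert (k+1))) := by
        obtain ⟨i, hi⟩ := hv1
        have hlen := Good.lt_length hi
        simp only [List.length_singleton] at hlen
        interval_cases i
        simpa using hi
      have hvpb : v = pb := by
        rcases Finset.mem_insert.1 hv1' with rfl | h
        · exact absurd hvb (hrsc b)
        · exact Finset.mem_singleton.1 h
      subst hvpb
      constructor
      · simp
      · rw [getD_reverse _ (by simpa using List.length_pos_iff.2 hBne), Nat.sub_zero, hBlast]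
        simp
  -- block 3 : middle with r inserted everywhere
  have g3 : Good G' (insert r (scope c)) (ms.map (insert r)) := by
    refine gm.insertAll r hmne ?_
    intro u v hu hv hadj
    rcases hu with rfl | hu
    · exact Or.inl rfl
    · rcases hv with rfl | hv
      · exact Or.inr (Or.inl rfl)
      · exact Or.inr (Or.inr ⟨hu, hv⟩)
  have hmslen : 0 < ms.length := List.length_pos_iff.2 hmne
  have g345 : Good G' (insert r (scope c) ∪ (↑({r, pb} : Finset (TildeTVert (k+1))) ∪ scope b))
      ((ms.map (insert r)) ++ ([{r, pb}] ++ Bs.reverse)) := by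
    refine g3.append g45 ?_ ?_
    · intro u v hadj hu hv
      rcases hu with rfl | huc
      · -- u = r
        have hirr : v ≠ r := fun h => hadj.ne (h ▸ rfl)
        obtain ⟨d, rfl⟩ := hradj v hadj
        have hdb : d = b := by
          rcases hv with hv | hv
          · simp only [Finset.coe_insert, Finset.coe_singleton, Set.mem_insert_iff,
              Set.mem_singleton_iff] at hv
            rcases hv with hv | hv
            · exact absurd hv hirr
            · by_contra hdb
              exact hdb (by
                have := congrArg (fun w => (Subtype.val w : List (Fin 3))) hv
                simp [push, root, hpb] at this
                exact this)
          · by_contra hdb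
            exact scope_disj hdb (push_mem_scope d _) hv
        subst hdb
        refine Or.inr (Or.inr ⟨{r, pb}, ?_, by simp, by simp [hpb]⟩)
        exact List.mem_append_right _ (List.mem_append_left _ (by simp))
      · rcases hv with hv | hv
        · simp only [Finset.coe_insert, Finset.coe_singleton, Set.mem_insert_iff,
            Set.mem_singleton_iff] at hv
          rcases hv with rfl | rfl
          · exact Or.inl ⟨Set.mem_insert_of_mem _ huc, Set.mem_insert _ _⟩
          · exact absurd (hle _ _ hadj) (fun h => no_cross (Ne.symm hbc) h huc hpbmem)
        · exact absurd (hle _ _ hadj) (fun h => no_cross (Ne.symm hbc) h huc hv)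
    · intro v hv1 hv2
      have hvL : v ∈ insert r (scope c) := g3.mem_scope_of_bags hv1
      have hvR : v ∈ (↑({r, pb} : Finset (TildeTVert (k+1))) ∪ scope b) :=
        g45.mem_scope_of_bags hv2
      have hvr : v = r := by
        rcases hvL with rfl | hvc
        · rfl
        · exfalso
          rcases hvR with hv | hv
          · simp only [Finset.coe_insert, Finset.coe_singleton, Set.mem_insert_iff,
              Set.mem_singleton_iff] at hv
            rcases hv with rfl | rfl
            · exact hrsc c hvc
            · exact scope_disj hbc hpbmem hvc
          · exact scope_disj hbc hv hvc
      subst hvr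
      constructor
      · rw [List.length_map, getD_map_insert _ _ (by omega)]
        exact Finset.mem_insert_self _ _
      · rw [List.getD_append _ _ _ _ (by simp)]
        simp
  -- block 2 : [{pa, r}]
  have g2 : Good G' (↑({pa, r} : Finset (TildeTVert (k+1)))) [{pa, r}] :=
    Good.single _ ⟨pa, Finset.mem_insert_self _ _⟩
  have hpapb : pa ≠ pb := by
    intro h
    have := congrArg (fun w => (Subtype.val w : List (Fin 3))) h
    simp [push, root, hpa, hpb] at this
    exact hab this
  have g2345 : Good G' (↑({pa, r} : Finset (TildeTVert (k+1))) ∪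
      (insert r (scope c) ∪ (↑({r, pb} : Finset (TildeTVert (k+1))) ∪ scope b)))
      ([{pa, r}] ++ ((ms.map (insert r)) ++ ([{r, pb}] ++ Bs.reverse))) := by
    refine g2.append g345 ?_ ?_
    · intro u v hadj hu hv
      simp only [Finset.coe_insert, Finset.coe_singleton, Set.mem_insert_iff,
        Set.mem_singleton_iff] at hu
      rcases hu with rfl | rfl
      · -- u = pa
        have hvr : v = r := by
          rcases hv with hv | hv
          · rcases hv with rfl | hvc
            · rfl
            · exact absurd (hle _ _ hadj) (fun h => no_cross hac h hpamem hvc)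
          · rcases hv with hv | hv
            · simp only [Finset.coe_insert, Finset.coe_singleton, Set.mem_insert_iff,
                Set.mem_singleton_iff] at hv
              rcases hv with rfl | rfl
              · rfl
              · exact absurd (hle _ _ hadj) (fun h => no_cross hab h hpamem hpbmem)
            · exact absurd (hle _ _ hadj) (fun h => no_cross hab h hpamem hv)
        subst hvr
        exact Or.inr (Or.inr ⟨{pa, r}, List.mem_append_left _ (by simp), by simp, by simp⟩)
      · -- u = r
        have hirr : v ≠ r := fun h => hadj.ne (h ▸ rfl)
        obtain ⟨d, rfl⟩ := hradj v hadj
        rcases hv with hv | hv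
        · rcases hv with hv | hvc
          · exact absurd hv hirr
          · -- push d root in scope c
            have hdc : d = c := by
              by_contra hdc
              exact scope_disj hdc (push_mem_scope d _) hvc
            cases hdc
            obtain ⟨B, hB, hpcB⟩ := gm.cover _ (push_mem_scope c (root k))
            refine Or.inr (Or.inr ⟨insert r B, ?_, Finset.mem_insert_self _ _,
              Finset.mem_insert_of_mem hpcB⟩)
            exact List.mem_append_right _ (List.mem_append_left _ (List.mem_map_of_mem hB))
        · have hdb : push d (root k) = pb := by
            rcases hv with hv | hv
            · simp only [Finset.coe_insert, Finset.coe_singleton, Set.mem_insert_iff,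
                Set.mem_singleton_iff] at hv
              rcases hv with hv | hv
              · exact absurd hv hirr
              · exact hv
            · have hdb : d = b := by
                by_contra hdb
                exact scope_disj hdb (push_mem_scope d _) hv
              subst hdb; rfl
          rw [hdb]
          refine Or.inr (Or.inr ⟨{r, pb}, ?_, by simp, by simp⟩)
          exact List.mem_append_right _
            (List.mem_append_right _ (List.mem_append_left _ (by simp)))
    · intro v hv1 hv2
      have hvL : v ∈ ({pa, r} : Finset (TildeTVert (k+1))) := by
        obtain ⟨i, hi⟩ := hv1
        have hlen := Good.lt_length hi
        simp only [List.length_singleton] at hlen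
        interval_cases i
        simpa using hi
      have hvR := g345.mem_scope_of_bags hv2
      have hvr : v = r := by
        rcases Finset.mem_insert.1 hvL with rfl | h
        · exfalso
          rcases hvR with hv | hv
          · rcases hv with hv | hvc
            · exact (push_ne_root a _) hv
            · exact scope_disj hac hpamem hvc
          · rcases hv with hv | hv
            · simp only [Finset.coe_insert, Finset.coe_singleton, Set.mem_insert_iff,
                Set.mem_singleton_iff] at hv
              rcases hv with hv | hv
              · exact (push_ne_root a _) hv
              · exact hpapb hv
            · exact scope_disj hab hpamem hv
        · exact Finset.mem_singleton.1 h
      subst hvr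
      refine ⟨by simp, ?_⟩
      rw [List.getD_append _ _ _ _ (by simpa using hmslen), getD_map_insert _ _ hmslen]
      exact Finset.mem_insert_self _ _
  have gall := gA.append g2345 ?hcross ?hshare
  case hcross =>
    intro u v hadj hu hv
    have hvr : v = pa ∨ v = r := by
      rcases hv with hv | hv
      · simp only [Finset.coe_insert, Finset.coe_singleton, Set.mem_insert_iff,
          Set.mem_singleton_iff] at hv
        exact hv
      · rcases hv with hv | hv
        · rcases hv with rfl | hvc
          · exact Or.inr rfl
          · exact absurd (hle _ _ hadj) (fun h => no_cross hac h hu hvc)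
        · rcases hv with hv | hv
          · simp only [Finset.coe_insert, Finset.coe_singleton, Set.mem_insert_iff,
              Set.mem_singleton_iff] at hv
            rcases hv with rfl | rfl
            · exact Or.inr rfl
            · exact absurd (hle _ _ hadj) (fun h => no_cross hab h hu hpbmem)
          · exact absurd (hle _ _ hadj) (fun h => no_cross hab h hu hv)
    rcases hvr with rfl | rfl
    · exact Or.inl ⟨hu, hpamem⟩
    · obtain ⟨d, rfl⟩ := hradj u hadj.symm
      have hda : d = a := by
        by_contra hda
        exact scope_disj hda (push_mem_scope d _) hu
      subst hda
      refine Or.inr (Or.inr ⟨{pa, r}, ?_, by simp [hpa], by simp⟩)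
      exact List.mem_append_right _ (List.mem_append_left _ (by simp))
  case hshare =>
    intro v hv1 hv2
    have hvL := gA.mem_scope_of_bags hv1
    have hvR := g2345.mem_scope_of_bags hv2
    have hvpa : v = pa := by
      rcases hvR with hv | hv
      · simp only [Finset.coe_insert, Finset.coe_singleton, Set.mem_insert_iff,
          Set.mem_singleton_iff] at hv
        rcases hv with rfl | rfl
        · rfl
        · exact absurd hvL (hrsc a)
      · exfalso
        rcases hv with hv | hv
        · rcases hv with rfl | hvc
          · exact hrsc a hvL
          · exact scope_disj hac hvL hvc
        · rcases hv with hv | hv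
          · simp only [Finset.coe_insert, Finset.coe_singleton, Set.mem_insert_iff,
              Set.mem_singleton_iff] at hv
            rcases hv with rfl | rfl
            · exact hrsc a hvL
            · exact scope_disj hab hvL hpbmem
          · exact scope_disj hab hvL hv
    subst hvpa
    refine ⟨by rw [hAlast]; simp, ?_⟩
    rw [List.getD_append _ _ _ _ (by simp)]
    simp
  refine gall.congr_scope ?_
  apply Set.eq_univ_of_forall
  intro v
  rcases vert_cases v with rfl | ⟨d, hd⟩
  · exact Or.inr (Or.inr (Or.inl (Set.mem_insert _ _)))
  · rcases fin3_cases hab hac hbc d with rfl | rfl | rfl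
    · exact Or.inl hd
    · exact Or.inr (Or.inr (Or.inr (Or.inr hd)))
    · exact Or.inr (Or.inr (Or.inl (Set.mem_insert_of_mem _ hd)))

end Glue

end TT

namespace TT

open List SimpleGraph Good

variable {k : ℕ} {G' : SimpleGraph (TildeTVert (k+1))}

lemma glueTree0 (hle : ∀ u v, G'.Adj u v → (tildeT (k+1)).Adj u v) {a b : Fin 3} (hab : a ≠ b)
    (hra : G'.Adj (root (k+1)) (push a (root k)))
    (hrb : G'.Adj (root (k+1)) (push b (root k)))
    {As Bs : List (Finset (TildeTVert (k+1)))}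
    (gA : Good G' (scope a) As) (hAne : As ≠ [])
    (hAlast : As.getD (As.length - 1) ∅ = {push a (root k)})
    (gB : Good G' (scope b) Bs) (hBne : Bs ≠ [])
    (hBlast : Bs.getD (Bs.length - 1) ∅ = {push b (root k)}) :
    Good G' (insert (root (k+1)) (scope a ∪ scope b))
      (As ++ ([{push a (root k), root (k+1)}] ++
        ([{root (k+1), push b (root k)}] ++ Bs.reverse))) := by
  set r := root (k+1) with hr
  set pa := push a (root k) with hpa
  set pb := push b (root k) with hpb
  have hrsc : ∀ d : Fin 3, r ∉ (scope d : Set (TildeTVert (k+1))) := fun d => root_not_scope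
  have hpamem : pa ∈ (scope a : Set (TildeTVert (k+1))) := push_mem_scope a _
  have hpbmem : pb ∈ (scope b : Set (TildeTVert (k+1))) := push_mem_scope b _
  have hradj : ∀ v : TildeTVert (k+1), G'.Adj r v → ∃ d, v = push d (root k) :=
    fun v h => root_adj (hle _ _ h)
  have hpapb : pa ≠ pb := by
    intro h
    have := congrArg (fun w => (Subtype.val w : List (Fin 3))) h
    simp [push, root, hpa, hpb] at this
    exact hab this
  have g5 : Good G' (scope b) Bs.reverse := gB.reverse
  have g4 : Good G' (↑({r, pb} : Finset (TildeTVert (k+1)))) [{r, pb}] :=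
    Good.single _ ⟨r, Finset.mem_insert_self _ _⟩
  have g45 : Good G' (↑({r, pb} : Finset (TildeTVert (k+1))) ∪ scope b)
      ([{r, pb}] ++ Bs.reverse) := by
    refine g4.append g5 ?_ ?_
    · intro u v hadj hu hv
      simp only [Finset.coe_insert, Finset.coe_singleton, Set.mem_insert_iff,
        Set.mem_singleton_iff] at hu
      rcases hu with rfl | rfl
      · obtain ⟨d, rfl⟩ := hradj v hadj
        have : d = b := by
          by_contra hdb
          exact scope_disj hdb (push_mem_scope d _) hv
        subst this
        exact Or.inr (Or.inr ⟨{r, pb}, by simp, by simp, by simp [hpb]⟩)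
      · exact Or.inr (Or.inl ⟨hpbmem, hv⟩)
    · intro v hv1 hv2
      have hvb : v ∈ (scope b : Set _) := g5.mem_scope_of_bags hv2
      have hv1' : v ∈ ({r, pb} : Finset (TildeTVert (k+1))) := by
        obtain ⟨i, hi⟩ := hv1
        have hlen := Good.lt_length hi
        simp only [List.length_singleton] at hlen
        interval_cases i
        simpa using hi
      have hvpb : v = pb := by
        rcases Finset.mem_insert.1 hv1' with rfl | h
        · exact absurd hvb (hrsc b)
        · exact Finset.mem_singleton.1 h
      subst hvpb
      constructor
      · simp
      · rw [getD_reverse _ (by simpa using List.length_pos_iff.2 hBne), Nat.sub_zero, hBlast]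
        simp
  have g2 : Good G' (↑({pa, r} : Finset (TildeTVert (k+1)))) [{pa, r}] :=
    Good.single _ ⟨pa, Finset.mem_insert_self _ _⟩
  have g245 : Good G' (↑({pa, r} : Finset (TildeTVert (k+1))) ∪
      (↑({r, pb} : Finset (TildeTVert (k+1))) ∪ scope b))
      ([{pa, r}] ++ ([{r, pb}] ++ Bs.reverse)) := by
    refine g2.append g45 ?_ ?_
    · intro u v hadj hu hv
      simp only [Finset.coe_insert, Finset.coe_singleton, Set.mem_insert_iff,
        Set.mem_singleton_iff] at hu
      rcases hu with rfl | rfl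
      · -- u = pa
        have hvr : v = r := by
          rcases hv with hv | hv
          · simp only [Finset.coe_insert, Finset.coe_singleton, Set.mem_insert_iff,
              Set.mem_singleton_iff] at hv
            rcases hv with rfl | rfl
            · rfl
            · exact absurd (hle _ _ hadj) (fun h => no_cross hab h hpamem hpbmem)
          · exact absurd (hle _ _ hadj) (fun h => no_cross hab h hpamem hv)
        subst hvr
        exact Or.inr (Or.inr ⟨{pa, r}, List.mem_append_left _ (by simp), by simp, by simp⟩)
      · -- u = r
        have hirr : v ≠ r := fun h => hadj.ne (h ▸ rfl)
        obtain ⟨d, rfl⟩ := hradj v hadj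
        have hdb : push d (root k) = pb := by
          rcases hv with hv | hv
          · simp only [Finset.coe_insert, Finset.coe_singleton, Set.mem_insert_iff,
              Set.mem_singleton_iff] at hv
            rcases hv with hv | hv
            · exact absurd hv hirr
            · exact hv
          · have hdb : d = b := by
              by_contra hdb
              exact scope_disj hdb (push_mem_scope d _) hv
            subst hdb; rfl
        rw [hdb]
        exact Or.inr (Or.inr ⟨{r, pb}, List.mem_append_right _ (List.mem_append_left _
          (by simp)), by simp, by simp⟩)
    · intro v hv1 hv2
      have hvL : v ∈ ({pa, r} : Finset (TildeTVert (k+1))) := by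
        obtain ⟨i, hi⟩ := hv1
        have hlen := Good.lt_length hi
        simp only [List.length_singleton] at hlen
        interval_cases i
        simpa using hi
      have hvR := g45.mem_scope_of_bags hv2
      have hvr : v = r := by
        rcases Finset.mem_insert.1 hvL with rfl | h
        · exfalso
          rcases hvR with hv | hv
          · simp only [Finset.coe_insert, Finset.coe_singleton, Set.mem_insert_iff,
              Set.mem_singleton_iff] at hv
            rcases hv with hv | hv
            · exact (push_ne_root a _) hv
            · exact hpapb hv
          · exact scope_disj hab hpamem hv
        · exact Finset.mem_singleton.1 h
      subst hvr
      refine ⟨by simp, ?_⟩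
      rw [List.getD_append _ _ _ _ (by simp)]
      simp
  have gall := gA.append g245 ?hcross ?hshare
  case hcross =>
    intro u v hadj hu hv
    have hvr : v = pa ∨ v = r := by
      rcases hv with hv | hv
      · simp only [Finset.coe_insert, Finset.coe_singleton, Set.mem_insert_iff,
          Set.mem_singleton_iff] at hv
        exact hv
      · rcases hv with hv | hv
        · simp only [Finset.coe_insert, Finset.coe_singleton, Set.mem_insert_iff,
            Set.mem_singleton_iff] at hv
          rcases hv with rfl | rfl
          · exact Or.inr rfl
          · exact absurd (hle _ _ hadj) (fun h => no_cross hab h hu hpbmem)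
        · exact absurd (hle _ _ hadj) (fun h => no_cross hab h hu hv)
    rcases hvr with rfl | rfl
    · exact Or.inl ⟨hu, hpamem⟩
    · obtain ⟨d, rfl⟩ := hradj u hadj.symm
      have hda : d = a := by
        by_contra hda
        exact scope_disj hda (push_mem_scope d _) hu
      subst hda
      exact Or.inr (Or.inr ⟨{pa, r}, List.mem_append_right _ (List.mem_append_left _ (by simp)),
        by simp [hpa], by simp⟩)
  case hshare =>
    intro v hv1 hv2
    have hvL := gA.mem_scope_of_bags hv1
    have hvR := g245.mem_scope_of_bags hv2
    have hvpa : v = pa := by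
      rcases hvR with hv | hv
      · simp only [Finset.coe_insert, Finset.coe_singleton, Set.mem_insert_iff,
          Set.mem_singleton_iff] at hv
        rcases hv with rfl | rfl
        · rfl
        · exact absurd hvL (hrsc a)
      · exfalso
        rcases hv with hv | hv
        · simp only [Finset.coe_insert, Finset.coe_singleton, Set.mem_insert_iff,
            Set.mem_singleton_iff] at hv
          rcases hv with rfl | rfl
          · exact hrsc a hvL
          · exact scope_disj hab hvL hpbmem
        · exact scope_disj hab hvL hv
    subst hvpa
    refine ⟨by rw [hAlast]; simp, ?_⟩
    rw [List.getD_append _ _ _ _ (by simp)]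
    simp
  refine gall.congr_scope ?_
  ext v
  simp only [Set.mem_union, Finset.coe_insert, Finset.coe_singleton, Set.mem_insert_iff,
    Set.mem_singleton_iff, Set.mem_setOf_eq]
  constructor
  · intro h
    rcases h with hv | hv | hv | hv
    · exact Or.inr (Or.inl hv)
    · rcases hv with rfl | rfl
      · exact Or.inr (Or.inl hpamem)
      · exact Or.inl rfl
    · rcases hv with rfl | rfl
      · exact Or.inl rfl
      · exact Or.inr (Or.inr hpbmem)
    · exact Or.inr (Or.inr hv)
  · intro h
    rcases h with rfl | hv | hv
    · exact Or.inr (Or.inl (Or.inr rfl))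
    · exact Or.inl hv
    · exact Or.inr (Or.inr (Or.inr hv))

end TT

namespace TT

open List SimpleGraph Good

def pend : TildeTVert 0 := ⟨[0], Or.inr ⟨rfl, rfl⟩⟩

lemma vert0 (v : TildeTVert 0) : v = root 0 ∨ v = pend := by
  rcases v.2 with h | ⟨h1, h2⟩
  · left
    exact eq_root_iff.2 (List.length_eq_zero_iff.1 (by omega))
  · right
    obtain ⟨a, ha⟩ := List.length_eq_one_iff.1 h1
    have : a = 0 := by
      rw [ha] at h2
      simpa using h2
    subst this
    exact Subtype.ext ha

lemma buildRootAll (k : ℕ) : ∃ bs : List (Finset (TildeTVert k)),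
    Good (tildeT k) Set.univ bs ∧ bs ≠ [] ∧ ∀ B ∈ bs, B.card ≤ k + 2 ∧ root k ∈ B := by
  induction k with
  | zero =>
    refine ⟨[{root 0, pend}], ?_, by simp, ?_⟩
    · refine (Good.single _ ⟨root 0, by simp⟩).congr_scope ?_
      apply Set.eq_univ_of_forall
      intro v
      rcases vert0 v with rfl | rfl <;> simp
    · intro B hB
      simp only [List.mem_singleton] at hB
      subst hB
      exact ⟨(Finset.card_insert_le _ _).trans (by simp), by simp⟩
  | succ k ih =>
    obtain ⟨bs, g, hne, hcard⟩ := ih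
    have mk : ∀ a : Fin 3, Good (tildeT (k+1)) (scope a) (bs.map (Finset.image (push a))) :=
      fun a => (g.map (push a) (push_inj a) (push_adj a)).congr_scope (scope_eq_range a)
    have hmapne : ∀ a : Fin 3, bs.map (Finset.image (push a)) ≠ [] := by
      intro a h
      exact hne (List.map_eq_nil_iff.1 h)
    have hcross : ∀ (a b : Fin 3), a ≠ b → ∀ (u v : TildeTVert (k+1)),
        (tildeT (k+1)).Adj u v → u ∈ (scope a : Set _) → v ∈ (scope b : Set _) → False :=
      fun a b hab u v h hu hv => no_cross hab h hu hv
    have g01 := (mk 0).append (mk 1)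
      (fun u v h hu hv => ((hcross 0 1 (by decide) u v h hu hv).elim))
      (fun v hv1 hv2 => ((scope_disj (show (0:Fin 3) ≠ 1 by decide)
        ((mk 0).mem_scope_of_bags hv1) ((mk 1).mem_scope_of_bags hv2)).elim))
    have g012 := g01.append (mk 2)
      (fun u v h hu hv => by
        rcases hu with hu | hu
        · exact (hcross 0 2 (by decide) u v h hu hv).elim
        · exact (hcross 1 2 (by decide) u v h hu hv).elim)
      (fun v hv1 hv2 => by
        have h2 := (mk 2).mem_scope_of_bags hv2
        rcases g01.mem_scope_of_bags hv1 with h | h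
        · exact (scope_disj (show (0:Fin 3) ≠ 2 by decide) h h2).elim
        · exact (scope_disj (show (1:Fin 3) ≠ 2 by decide) h h2).elim)
    have hnefull : (bs.map (Finset.image (push 0)) ++ bs.map (Finset.image (push 1)))
        ++ bs.map (Finset.image (push 2)) ≠ [] := by
      intro h
      rw [List.append_eq_nil_iff] at h
      rw [List.append_eq_nil_iff] at *
      exact hmapne 0 (by tauto)
    have gfin := g012.insertAll (root (k+1)) hnefull
      (fun u v hu hv hadj => by
        rcases hu with rfl | hu
        · exact Or.inl rfl
        · rcases hv with rfl | hv
          · exact Or.inr (Or.inl rfl)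
          · exact Or.inr (Or.inr ⟨hu, hv⟩))
    refine ⟨_, gfin.congr_scope ?_, by
      simp only [ne_eq, List.map_eq_nil_iff]
      exact hnefull, ?_⟩
    · apply Set.eq_univ_of_forall
      intro v
      rcases vert_cases v with rfl | ⟨d, hd⟩
      · exact Set.mem_insert _ _
      · refine Set.mem_insert_of_mem _ ?_
        rcases fin3_cases (show (0:Fin 3) ≠ 1 by decide) (show (0:Fin 3) ≠ 2 by decide)
          (show (1:Fin 3) ≠ 2 by decide) d with rfl | rfl | rfl
        · exact Or.inl (Or.inl hd)
        · exact Or.inl (Or.inr hd)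
        · exact Or.inr hd
    · intro B hB
      obtain ⟨B', hB', rfl⟩ := List.mem_map.1 hB
      have hcard' : B'.card ≤ k + 2 := by
        have : ∀ a : Fin 3, B' ∈ bs.map (Finset.image (push a)) → B'.card ≤ k + 2 := by
          intro a h
          obtain ⟨B'', hB'', rfl⟩ := List.mem_map.1 h
          exact (Finset.card_image_le).trans (hcard B'' hB'').1
        rcases List.mem_append.1 hB' with h | h
        · rcases List.mem_append.1 h with h | h
          · exact this 0 h
          · exact this 1 h
        · exact this 2 h
      exact ⟨(Finset.card_insert_le _ _).trans (by omega), Finset.mem_insert_self _ _⟩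

lemma buildEnd (k : ℕ) : ∃ bs : List (Finset (TildeTVert k)),
    Good (tildeT k) Set.univ bs ∧ bs ≠ [] ∧ (∀ B ∈ bs, B.card ≤ k + 2) ∧
      bs.getD (bs.length - 1) ∅ = {root k} := by
  obtain ⟨bs, g, hne, hcard⟩ := buildRootAll k
  have hlen : 0 < bs.length := List.length_pos_iff.2 hne
  have gsing : Good (tildeT k) (↑({root k} : Finset (TildeTVert k))) [{root k}] :=
    Good.single _ ⟨root k, by simp⟩
  have gapp := g.append gsing
    (fun u v h hu hv => Or.inl ⟨trivial, trivial⟩)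
    (fun v hv1 hv2 => by
      have hvr : v = root k := by
        have := gsing.mem_scope_of_bags hv2
        simpa using this
      subst hvr
      refine ⟨?_, by simp⟩
      exact (hcard _ (getD_mem (by omega))).2)
  refine ⟨bs ++ [{root k}], gapp.congr_scope (by simp), by simp, ?_, ?_⟩
  · intro B hB
    rcases List.mem_append.1 hB with h | h
    · exact (hcard B h).1
    · simp only [List.mem_singleton] at h
      subst h
      have : ({root k} : Finset (TildeTVert k)).card = 1 := by simp
      omega
  · rw [List.length_append, List.length_singleton,
      List.getD_append_right _ _ _ _ (by omega)]
    have : bs.length + 1 - 1 - bs.length = 0 := by omega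
    rw [this]
    rfl

lemma pushedEnd (k : ℕ) (a : Fin 3) : ∃ As : List (Finset (TildeTVert (k+1))),
    Good (tildeT (k+1)) (scope a) As ∧ As ≠ [] ∧ (∀ B ∈ As, B.card ≤ k + 2) ∧
      As.getD (As.length - 1) ∅ = {push a (root k)} := by
  obtain ⟨bs, g, hne, hcard, hlast⟩ := buildEnd k
  refine ⟨bs.map (Finset.image (push a)),
    (g.map (push a) (push_inj a) (push_adj a)).congr_scope (scope_eq_range a),
    by simpa using hne, ?_, ?_⟩
  · intro B hB
    obtain ⟨B', hB', rfl⟩ := List.mem_map.1 hB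
    exact (Finset.card_image_le).trans (hcard B' hB')
  · rw [List.length_map, getD_map_image, hlast]
    simp

lemma pushedRootAll (k : ℕ) (a : Fin 3) : ∃ Cs : List (Finset (TildeTVert (k+1))),
    Good (tildeT (k+1)) (scope a) Cs ∧ Cs ≠ [] ∧
      ∀ B ∈ Cs, B.card ≤ k + 2 ∧ push a (root k) ∈ B := by
  obtain ⟨bs, g, hne, hcard⟩ := buildRootAll k
  refine ⟨bs.map (Finset.image (push a)),
    (g.map (push a) (push_inj a) (push_adj a)).congr_scope (scope_eq_range a),
    by simpa using hne, ?_⟩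
  intro B hB
  obtain ⟨B', hB', rfl⟩ := List.mem_map.1 hB
  exact ⟨(Finset.card_image_le).trans (hcard B' hB').1,
    Finset.mem_image_of_mem _ (hcard B' hB').2⟩

end TT

namespace TT

open List SimpleGraph Good

lemma other_letters : ∀ c : Fin 3, ∃ a b : Fin 3, a ≠ b ∧ a ≠ c ∧ b ≠ c := by decide

lemma push_root_inj {k : ℕ} {a b : Fin 3} (h : push a (root k) = push b (root k)) : a = b := by
  have := congrArg (fun w => (Subtype.val w : List (Fin 3))) h
  simpa [push, root] using this

lemma adj0_sym2 {u v : TildeTVert 0} (h : (tildeT 0).Adj u v) : s(u, v) = s(root 0, pend) := by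
  rcases vert0 u with rfl | rfl <;> rcases vert0 v with rfl | rfl
  · exact absurd rfl h.ne
  · rfl
  · exact Sym2.eq_swap
  · exact absurd rfl h.ne

lemma delAux : ∀ (k : ℕ) (x y : TildeTVert k) (c : Fin 3), y.1 = x.1 ++ [c] →
    (tildeT k).Adj x y →
    ∃ bs, Good ((tildeT k).deleteEdges {s(x, y)}) Set.univ bs ∧ ∀ B ∈ bs, B.card ≤ k + 1 := by
  intro k
  induction k with
  | zero =>
    intro x y c hc hxy
    refine ⟨[{root 0}, {pend}], ⟨?_, fun B _ v _ => trivial, ?_, ?_⟩, ?_⟩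
    · intro v _
      rcases vert0 v with rfl | rfl
      · exact ⟨{root 0}, by simp, by simp⟩
      · exact ⟨{pend}, by simp, by simp⟩
    · intro u v _ _ hadj
      rw [SimpleGraph.deleteEdges_adj] at hadj
      exact absurd (adj0_sym2 hadj.1) (by simpa [adj0_sym2 hxy] using hadj.2)
    · intro v i j l hij hjl hi hl
      have hi2 : i < 2 := by simpa using Good.lt_length hi
      have hl2 : l < 2 := by simpa using Good.lt_length hl
      interval_cases i <;> interval_cases l <;> interval_cases j <;> assumption
    · intro B hB
      rcases List.mem_cons.1 hB with rfl | hB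
      · simp
      · simp only [List.mem_singleton] at hB
        subst hB
        simp
  | succ k ih =>
    intro x y c hc hxy
    have hDadj : ∀ u v : TildeTVert (k+1),
        ((tildeT (k+1)).deleteEdges {s(x, y)}).Adj u v ↔
          (tildeT (k+1)).Adj u v ∧ s(u, v) ≠ s(x, y) := by
      intro u v
      rw [SimpleGraph.deleteEdges_adj]
      simp
    have hle : ∀ u v, ((tildeT (k+1)).deleteEdges {s(x, y)}).Adj u v →
        (tildeT (k+1)).Adj u v := fun u v h => ((hDadj u v).1 h).1
    by_cases hx : x.1 = []
    · -- edge at the root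
      obtain rfl : x = root (k+1) := eq_root_iff.2 hx
      obtain rfl : y = push c (root k) := by
        refine Subtype.ext ?_
        rw [hc]
        simp [push, root, hx]
      obtain ⟨a, b, hab, hac, hbc⟩ := other_letters c
      obtain ⟨As, gA0, hAne, hAcard, hAlast⟩ := pushedEnd k a
      obtain ⟨Bs, gB0, hBne, hBcard, hBlast⟩ := pushedEnd k b
      obtain ⟨Cs, gC0, hCne, hCcard⟩ := pushedRootAll k c
      have hra : ((tildeT (k+1)).deleteEdges {s(root (k+1), push c (root k))}).Adj
          (root (k+1)) (push a (root k)) := by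
        rw [hDadj]
        refine ⟨adj_root_push a, fun heq => ?_⟩
        rcases Sym2.eq_iff.1 heq with ⟨_, h2⟩ | ⟨h1, _⟩
        · exact hac (push_root_inj h2)
        · exact push_ne_root c _ h1.symm
      have hrb : ((tildeT (k+1)).deleteEdges {s(root (k+1), push c (root k))}).Adj
          (root (k+1)) (push b (root k)) := by
        rw [hDadj]
        refine ⟨adj_root_push b, fun heq => ?_⟩
        rcases Sym2.eq_iff.1 heq with ⟨_, h2⟩ | ⟨h1, _⟩
        · exact hbc (push_root_inj h2)
        · exact push_ne_root c _ h1.symm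
      have G0 := glueTree0 hle hab hra hrb (gA0.mono hle) hAne hAlast (gB0.mono hle) hBne hBlast
      have gC := gC0.mono hle
      have gfin := gC.append G0 ?hcross ?hshare
      case hcross =>
        intro u v hadj hu hv
        exfalso
        rcases hv with rfl | hv
        · -- v = root
          obtain ⟨d, rfl⟩ := root_adj (hle _ _ hadj).symm
          have hd : d = c := by
            by_contra hd
            exact scope_disj hd (push_mem_scope d _) hu
          subst hd
          exact ((hDadj _ _).1 hadj).2 Sym2.eq_swap
        · rcases hv with hv | hv
          · exact no_cross (Ne.symm hac) (hle _ _ hadj) hu hv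
          · exact no_cross (Ne.symm hbc) (hle _ _ hadj) hu hv
      case hshare =>
        intro v hv1 hv2
        exfalso
        have h1 := gC.mem_scope_of_bags hv1
        rcases G0.mem_scope_of_bags hv2 with rfl | h2
        · exact root_not_scope h1
        · rcases h2 with h2 | h2
          · exact scope_disj (Ne.symm hac) h1 h2
          · exact scope_disj (Ne.symm hbc) h1 h2
      refine ⟨_, gfin.congr_scope ?_, ?_⟩
      · apply Set.eq_univ_of_forall
        intro v
        rcases vert_cases v with rfl | ⟨d, hd⟩
        · exact Or.inr (Set.mem_insert _ _)
        · rcases fin3_cases hab hac hbc d with rfl | rfl | rfl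
          · exact Or.inr (Set.mem_insert_of_mem _ (Or.inl hd))
          · exact Or.inr (Set.mem_insert_of_mem _ (Or.inr hd))
          · exact Or.inl hd
      · intro B hB
        rcases List.mem_append.1 hB with hB | hB
        · exact (hCcard B hB).1
        · rcases List.mem_append.1 hB with hB | hB
          · exact (hAcard B hB).trans (by omega)
          · rcases List.mem_append.1 hB with hB | hB
            · simp only [List.mem_singleton] at hB
              subst hB
              exact (Finset.card_insert_le _ _).trans (by simp)
            · rcases List.mem_append.1 hB with hB | hB
              · simp only [List.mem_singleton] at hB
                subst hB
                exact (Finset.card_insert_le _ _).trans (by simp)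
              · exact (hBcard B (List.mem_reverse.1 hB)).trans (by omega)
    · -- edge inside a subtree
      obtain ⟨h0, t, hlx⟩ : ∃ h0 t, x.1 = h0 :: t := by
        cases hl : x.1 with
        | nil => exact absurd hl hx
        | cons h0 t => exact ⟨h0, t, rfl⟩
      have hxs : x ∈ (scope h0 : Set (TildeTVert (k+1))) := by simp [scope, hlx]
      have hys : y ∈ (scope h0 : Set (TildeTVert (k+1))) := by simp [scope, hc, hlx]
      obtain ⟨x', -, hx'⟩ := (scope_eq_range h0).symm.subset hxs
      obtain ⟨y', -, hy'⟩ := (scope_eq_range h0).symm.subset hys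
      have hxy' : (tildeT k).Adj x' y' := by
        rw [← push_adj h0, hx', hy']
        exact hxy
      have hc' : y'.1 = x'.1 ++ [c] := by
        have h1 : (push h0 y').1 = (push h0 x').1 ++ [c] := by
          rw [hx', hy', hc]
        simpa [push] using h1
      obtain ⟨ds, gd, hdcard⟩ := ih x' y' c hc' hxy'
      have hdsne : ds ≠ [] := by
        obtain ⟨B, hB, -⟩ := gd.cover (root k) trivial
        exact List.ne_nil_of_mem hB
      -- transport
      have hadjiff : ∀ u v : TildeTVert k,
          ((tildeT (k+1)).deleteEdges {s(x, y)}).Adj (push h0 u) (push h0 v) ↔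
            ((tildeT k).deleteEdges {s(x', y')}).Adj u v := by
        intro u v
        rw [hDadj, SimpleGraph.deleteEdges_adj, push_adj]
        have : (s(push h0 u, push h0 v) = s(x, y)) ↔ s(u, v) = s(x', y') := by
          rw [← hx', ← hy', Sym2.eq_iff, Sym2.eq_iff]
          constructor
          · rintro (⟨h1, h2⟩ | ⟨h1, h2⟩)
            · exact Or.inl ⟨push_inj h0 h1, push_inj h0 h2⟩
            · exact Or.inr ⟨push_inj h0 h1, push_inj h0 h2⟩
          · rintro (⟨rfl, rfl⟩ | ⟨rfl, rfl⟩)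
            · exact Or.inl ⟨rfl, rfl⟩
            · exact Or.inr ⟨rfl, rfl⟩
        simp only [ne_eq, Set.mem_singleton_iff, this]
      have gm : Good ((tildeT (k+1)).deleteEdges {s(x, y)}) (scope h0)
          (ds.map (Finset.image (push h0))) :=
        (Good.map (push h0) (push_inj h0) hadjiff gd).congr_scope (scope_eq_range h0)
      obtain ⟨a, b, hab, hac, hbc⟩ := other_letters h0
      obtain ⟨As, gA0, hAne, hAcard, hAlast⟩ := pushedEnd k a
      obtain ⟨Bs, gB0, hBne, hBcard, hBlast⟩ := pushedEnd k b
      have hxyescape : ∀ d : Fin 3, d ≠ h0 →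
          s(root (k+1), push d (root k)) ≠ s(x, y) := by
        intro d hd heq
        rcases Sym2.eq_iff.1 heq with ⟨h1, -⟩ | ⟨h2, -⟩
        · exact root_not_scope (h1.symm ▸ hxs)
        · exact root_not_scope (h2.symm ▸ hys)
      have hra : ((tildeT (k+1)).deleteEdges {s(x, y)}).Adj (root (k+1)) (push a (root k)) :=
        (hDadj _ _).2 ⟨adj_root_push a, hxyescape a hac⟩
      have hrb : ((tildeT (k+1)).deleteEdges {s(x, y)}).Adj (root (k+1)) (push b (root k)) :=
        (hDadj _ _).2 ⟨adj_root_push b, hxyescape b hbc⟩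
      have gfin := glueTree hle hab hac hbc hra hrb (gA0.mono hle) hAne hAlast
        (gB0.mono hle) hBne hBlast gm (by simpa using hdsne)
      refine ⟨_, gfin, ?_⟩
      intro B hB
      rcases List.mem_append.1 hB with hB | hB
      · exact (hAcard B hB).trans (by omega)
      · rcases List.mem_append.1 hB with hB | hB
        · simp only [List.mem_singleton] at hB
          subst hB
          exact (Finset.card_insert_le _ _).trans (by simp)
        · rcases List.mem_append.1 hB with hB | hB
          · obtain ⟨B', hB', rfl⟩ := List.mem_map.1 hB
            obtain ⟨B'', hB'', rfl⟩ := List.mem_map.1 hB'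
            calc (insert (root (k+1)) (B''.image (push h0))).card
                ≤ (B''.image (push h0)).card + 1 := Finset.card_insert_le _ _
              _ ≤ B''.card + 1 := by
                  have := Finset.card_image_le (f := push h0) (s := B'')
                  omega
              _ ≤ k + 2 := by have := hdcard B'' hB''; omega
          · rcases List.mem_append.1 hB with hB | hB
            · simp only [List.mem_singleton] at hB
              subst hB
              exact (Finset.card_insert_le _ _).trans (by simp)
            · exact (hBcard B (List.mem_reverse.1 hB)).trans (by omega)

lemma del (k : ℕ) (x y : TildeTVert k) (hxy : (tildeT k).Adj x y) :
    ∃ bs, Good ((tildeT k).deleteEdges {s(x, y)}) Set.univ bs ∧ ∀ B ∈ bs, B.card ≤ k + 1 := by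
  rcases adj_iff.1 hxy with ⟨c, hc⟩ | ⟨c, hc⟩
  · exact delAux k x y c hc hxy
  · obtain ⟨bs, g, hcard⟩ := delAux k y x c hc hxy.symm
    refine ⟨bs, ?_, hcard⟩
    rwa [Sym2.eq_swap] at g

end TT

namespace TT

open List SimpleGraph Good

lemma satAux : ∀ (k : ℕ) (x y : TildeTVert k) (c : Fin 3), y.1 = x.1 ++ [c] →
    (tildeT k).Adj x y →
    ∃ bs, Good (tildeT k) Set.univ bs ∧
      ∀ B ∈ bs, B.card ≤ k + 2 ∧ (B.card = k + 2 → x ∈ B ∧ y ∈ B) := by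
  intro k
  induction k with
  | zero =>
    intro x y c hc hxy
    refine ⟨[{root 0, pend}], ?_, ?_⟩
    · refine (Good.single _ ⟨root 0, by simp⟩).congr_scope ?_
      apply Set.eq_univ_of_forall
      intro v
      rcases vert0 v with rfl | rfl <;> simp
    · intro B hB
      simp only [List.mem_singleton] at hB
      subst hB
      have hall : ∀ v : TildeTVert 0, v ∈ ({root 0, pend} : Finset (TildeTVert 0)) := by
        intro v
        rcases vert0 v with rfl | rfl <;> simp
      exact ⟨(Finset.card_insert_le _ _).trans (by simp), fun _ => ⟨hall x, hall y⟩⟩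
  | succ k ih =>
    intro x y c hc hxy
    have hle : ∀ u v : TildeTVert (k+1), (tildeT (k+1)).Adj u v → (tildeT (k+1)).Adj u v :=
      fun _ _ h => h
    by_cases hx : x.1 = []
    · -- edge at the root
      obtain rfl : x = root (k+1) := eq_root_iff.2 hx
      obtain rfl : y = push c (root k) := by
        refine Subtype.ext ?_
        rw [hc]
        simp [push, root, hx]
      obtain ⟨a, b, hab, hac, hbc⟩ := other_letters c
      obtain ⟨As, gA0, hAne, hAcard, hAlast⟩ := pushedEnd k a
      obtain ⟨Bs, gB0, hBne, hBcard, hBlast⟩ := pushedEnd k b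
      obtain ⟨Cs, gC0, hCne, hCcard⟩ := pushedRootAll k c
      have gfin := glueTree hle hab hac hbc (adj_root_push a) (adj_root_push b)
        gA0 hAne hAlast gB0 hBne hBlast gC0 hCne
      refine ⟨_, gfin, ?_⟩
      intro B hB
      rcases List.mem_append.1 hB with hB | hB
      · exact ⟨(hAcard B hB).trans (by omega), fun h => by
          have := hAcard B hB; omega⟩
      · rcases List.mem_append.1 hB with hB | hB
        · simp only [List.mem_singleton] at hB
          subst hB
          refine ⟨(Finset.card_insert_le _ _).trans (by simp), fun h => ?_⟩
          have h2 : ({push a (root k), root (k+1)} : Finset (TildeTVert (k+1))).card ≤ 2 :=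
            (Finset.card_insert_le _ _).trans (by simp)
          omega
        · rcases List.mem_append.1 hB with hB | hB
          · obtain ⟨B', hB', rfl⟩ := List.mem_map.1 hB
            refine ⟨(Finset.card_insert_le _ _).trans (by have := (hCcard B' hB').1; omega),
              fun _ => ⟨Finset.mem_insert_self _ _,
                Finset.mem_insert_of_mem (hCcard B' hB').2⟩⟩
          · rcases List.mem_append.1 hB with hB | hB
            · simp only [List.mem_singleton] at hB
              subst hB
              refine ⟨(Finset.card_insert_le _ _).trans (by simp), fun h => ?_⟩
              have h2 : ({root (k+1), push b (root k)} : Finset (TildeTVert (k+1))).card ≤ 2 :=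
                (Finset.card_insert_le _ _).trans (by simp)
              omega
            · have hB2 := List.mem_reverse.1 hB
              exact ⟨(hBcard B hB2).trans (by omega), fun h => by
                have := hBcard B hB2; omega⟩
    · -- edge inside a subtree
      obtain ⟨h0, t, hlx⟩ : ∃ h0 t, x.1 = h0 :: t := by
        cases hl : x.1 with
        | nil => exact absurd hl hx
        | cons h0 t => exact ⟨h0, t, rfl⟩
      have hxs : x ∈ (scope h0 : Set (TildeTVert (k+1))) := by simp [scope, hlx]
      have hys : y ∈ (scope h0 : Set (TildeTVert (k+1))) := by simp [scope, hc, hlx]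
      obtain ⟨x', -, hx'⟩ := (scope_eq_range h0).symm.subset hxs
      obtain ⟨y', -, hy'⟩ := (scope_eq_range h0).symm.subset hys
      have hxy' : (tildeT k).Adj x' y' := by
        rw [← push_adj h0, hx', hy']
        exact hxy
      have hc' : y'.1 = x'.1 ++ [c] := by
        have h1 : (push h0 y').1 = (push h0 x').1 ++ [c] := by
          rw [hx', hy', hc]
        simpa [push] using h1
      obtain ⟨ss, gs, hscard⟩ := ih x' y' c hc' hxy'
      have hssne : ss ≠ [] := by
        obtain ⟨B, hB, -⟩ := gs.cover (root k) trivial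
        exact List.ne_nil_of_mem hB
      have gm : Good (tildeT (k+1)) (scope h0) (ss.map (Finset.image (push h0))) :=
        (Good.map (push h0) (push_inj h0) (push_adj h0) gs).congr_scope (scope_eq_range h0)
      obtain ⟨a, b, hab, hac, hbc⟩ := other_letters h0
      obtain ⟨As, gA0, hAne, hAcard, hAlast⟩ := pushedEnd k a
      obtain ⟨Bs, gB0, hBne, hBcard, hBlast⟩ := pushedEnd k b
      have gfin := glueTree hle hab hac hbc (adj_root_push a) (adj_root_push b)
        gA0 hAne hAlast gB0 hBne hBlast gm (by simpa using hssne)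
      refine ⟨_, gfin, ?_⟩
      intro B hB
      rcases List.mem_append.1 hB with hB | hB
      · exact ⟨(hAcard B hB).trans (by omega), fun h => by have := hAcard B hB; omega⟩
      · rcases List.mem_append.1 hB with hB | hB
        · simp only [List.mem_singleton] at hB
          subst hB
          refine ⟨(Finset.card_insert_le _ _).trans (by simp), fun h => ?_⟩
          have h2 : ({push a (root k), root (k+1)} : Finset (TildeTVert (k+1))).card ≤ 2 :=
            (Finset.card_insert_le _ _).trans (by simp)
          omega
        · rcases List.mem_append.1 hB with hB | hB
          · obtain ⟨B', hB', rfl⟩ := List.mem_map.1 hB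
            obtain ⟨B'', hB'', rfl⟩ := List.mem_map.1 hB'
            have himcard : (B''.image (push h0)).card = B''.card :=
              Finset.card_image_of_injective _ (push_inj h0)
            have hrnotmem : root (k+1) ∉ B''.image (push h0) := by
              intro hmem
              obtain ⟨u, -, hu⟩ := Finset.mem_image.1 hmem
              exact push_ne_root h0 u hu
            have hinscard : (insert (root (k+1)) (B''.image (push h0))).card =
                B''.card + 1 := by
              rw [Finset.card_insert_of_notMem hrnotmem, himcard]
            have hb2 := hscard B'' hB''
            refine ⟨by omega, fun h => ?_⟩
            have : B''.card = k + 2 := by omega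
            obtain ⟨hx2, hy2⟩ := hb2.2 this
            exact ⟨Finset.mem_insert_of_mem (hx' ▸ Finset.mem_image_of_mem _ hx2),
              Finset.mem_insert_of_mem (hy' ▸ Finset.mem_image_of_mem _ hy2)⟩
          · rcases List.mem_append.1 hB with hB | hB
            · simp only [List.mem_singleton] at hB
              subst hB
              refine ⟨(Finset.card_insert_le _ _).trans (by simp), fun h => ?_⟩
              have h2 : ({root (k+1), push b (root k)} : Finset (TildeTVert (k+1))).card ≤ 2 :=
                (Finset.card_insert_le _ _).trans (by simp)
              omega
            · have hB2 := List.mem_reverse.1 hB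
              exact ⟨(hBcard B hB2).trans (by omega), fun h => by have := hBcard B hB2; omega⟩

lemma sat (k : ℕ) (x y : TildeTVert k) (hxy : (tildeT k).Adj x y) :
    ∃ bs, Good (tildeT k) Set.univ bs ∧
      ∀ B ∈ bs, B.card ≤ k + 2 ∧ (B.card = k + 2 → x ∈ B ∧ y ∈ B) := by
  rcases adj_iff.1 hxy with ⟨c, hc⟩ | ⟨c, hc⟩
  · exact satAux k x y c hc hxy
  · obtain ⟨bs, g, hcard⟩ := satAux k y x c hc hxy.symm
    exact ⟨bs, g, fun B hB => ⟨(hcard B hB).1, fun h => ⟨((hcard B hB).2 h).2,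
      ((hcard B hB).2 h).1⟩⟩⟩

end TT

namespace TT

open List SimpleGraph Good

variable {k : ℕ}

/-- bags of a `PathDecomp` as an ℕ-indexed family -/
def bagN {V : Type*} {G : SimpleGraph V} (P : PathDecomp G) (i : ℕ) : Finset V :=
  if h : i < P.n then P.bag ⟨i, h⟩ else ∅

lemma bagN_coe {V : Type*} {G : SimpleGraph V} (P : PathDecomp G) (i : Fin P.n) :
    bagN P i = P.bag i := by
  simp [bagN, i.2]

lemma bagN_convex {V : Type*} {G : SimpleGraph V} (P : PathDecomp G) :
    ∀ v i j l, i ≤ j → j ≤ l → v ∈ bagN P i → v ∈ bagN P l → v ∈ bagN P j := by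
  intro v i j l hij hjl hi hl
  simp only [bagN] at hi hl ⊢
  split at hi
  case isFalse => simp at hi
  case isTrue hin =>
    split at hl
    case isFalse => simp at hl
    case isTrue hln =>
      rw [dif_pos (by omega : j < P.n)]
      exact P.convex v ⟨i, hin⟩ ⟨j, by omega⟩ ⟨l, hln⟩ hij hjl hi hl

lemma bagN_adj {V : Type*} {G : SimpleGraph V} (P : PathDecomp G) :
    ∀ u v, G.Adj u v → ∃ i, u ∈ bagN P i ∧ v ∈ bagN P i := by
  intro u v h
  obtain ⟨i, h1, h2⟩ := P.adj_bag u v h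
  exact ⟨i, by rwa [bagN_coe], by rwa [bagN_coe]⟩

/-- restriction of a decomposition to the subtree with first letter `a`. -/
noncomputable def restrict (P : PathDecomp (tildeT (k+1))) (a : Fin 3) : PathDecomp (tildeT k) where
  n := P.n
  bag i := (P.bag i).preimage (push a) (Set.injOn_of_injective (push_inj a))
  mem_bag := by
    intro v
    obtain ⟨i, hi⟩ := P.mem_bag (push a v)
    exact ⟨i, Finset.mem_preimage.2 hi⟩
  adj_bag := by
    intro u v h
    obtain ⟨i, h1, h2⟩ := P.adj_bag _ _ ((push_adj a u v).2 h)
    exact ⟨i, Finset.mem_preimage.2 h1, Finset.mem_preimage.2 h2⟩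
  convex := by
    intro v i j l hij hjl hi hl
    exact Finset.mem_preimage.2 (P.convex _ i j l hij hjl
      (Finset.mem_preimage.1 hi) (Finset.mem_preimage.1 hl))

lemma middle3 {n : ℕ} (hn : 0 < n) (t : Fin 3 → Fin n) :
    ∃ p q r : Fin 3, p ≠ q ∧ p ≠ r ∧ q ≠ r ∧ t p ≤ t q ∧ t q ≤ t r := by
  rcases le_total (t 0) (t 1) with h01 | h01 <;>
    rcases le_total (t 1) (t 2) with h12 | h12 <;>
      rcases le_total (t 0) (t 2) with h02 | h02
  · exact ⟨0, 1, 2, by decide, by decide, by decide, h01, h12⟩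
  · exact ⟨0, 1, 2, by decide, by decide, by decide, h01, h12⟩
  · exact ⟨0, 2, 1, by decide, by decide, by decide, h02, h12⟩
  · exact ⟨2, 0, 1, by decide, by decide, by decide, h02, h01⟩
  · exact ⟨1, 0, 2, by decide, by decide, by decide, h01, h02⟩
  · exact ⟨1, 2, 0, by decide, by decide, by decide, h12, h02⟩
  · exact ⟨2, 1, 0, by decide, by decide, by decide, h12, h01⟩
  · exact ⟨2, 1, 0, by decide, by decide, by decide, h12, h01⟩

lemma head?_dropLast {α : Type*} (l : List α) :
    l.dropLast.head? = none ∨ l.dropLast.head? = l.head? := by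
  cases l with
  | nil => exact Or.inl rfl
  | cons a t =>
    cases t with
    | nil => exact Or.inl rfl
    | cons b t' => exact Or.inr (by simp)

lemma lower : ∀ (k : ℕ) (P : PathDecomp (tildeT k)), ∃ i, k + 2 ≤ (P.bag i).card := by
  intro k
  induction k with
  | zero =>
    intro P
    have hadj : (tildeT 0).Adj (root 0) pend := by
      rw [adj_iff]
      exact Or.inl ⟨0, rfl⟩
    obtain ⟨i, h1, h2⟩ := P.adj_bag _ _ hadj
    refine ⟨i, ?_⟩
    have hsub : ({root 0, pend} : Finset (TildeTVert 0)) ⊆ P.bag i := by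
      intro v hv
      rcases Finset.mem_insert.1 hv with rfl | hv
      · exact h1
      · rw [Finset.mem_singleton.1 hv]; exact h2
    calc (2 : ℕ) = ({root 0, pend} : Finset (TildeTVert 0)).card := by
          rw [Finset.card_insert_of_notMem (by
            simp only [Finset.mem_singleton]
            intro h
            have := congrArg (fun w : TildeTVert 0 => w.1) h
            simp [pend, root] at this), Finset.card_singleton]
      _ ≤ _ := Finset.card_le_card hsub
  | succ k ih =>
    intro P
    have hn : 0 < P.n := by
      obtain ⟨i, -⟩ := P.mem_bag (root (k+1))
      exact i.pos
    -- big indices for each subtree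
    have hbig : ∀ a : Fin 3, ∃ t : Fin P.n,
        k + 2 ≤ (((P.bag t).preimage (push a)
          (Set.injOn_of_injective (push_inj a))).image (push a)).card ∧
        ((P.bag t).preimage (push a) (Set.injOn_of_injective (push_inj a))).image (push a)
          ⊆ P.bag t := by
      intro a
      obtain ⟨t, ht⟩ := ih (restrict P a)
      refine ⟨t, ?_, ?_⟩
      · rwa [Finset.card_image_of_injective _ (push_inj a)]
      · intro v hv
        obtain ⟨u, hu, rfl⟩ := Finset.mem_image.1 hv
        exact Finset.mem_preimage.1 hu
    choose t ht using hbig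
    obtain ⟨p, q, r, hpq, hpr, hqr, hle1, hle2⟩ := middle3 hn t
    set S : Set (TildeTVert (k+1)) := {v | v.1.head? ≠ some q} with hS
    have hrootS : root (k+1) ∈ S := by
      change (root (k+1)).1.head? ≠ some q
      simp [hS, root]
    have hclosed : ∀ v ∈ S, parent v ∈ S := by
      intro v hv
      rcases head?_dropLast v.1 with h | h
      · change (parent v).1.head? ≠ some q
        simp only [hS, Set.mem_setOf_eq, parent, h]
        simp
      · change (parent v).1.head? ≠ some q
        simp only [hS, Set.mem_setOf_eq, parent, h]
        exact hv
    have hconn := prefix_closed_connected hrootS hclosed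
    have hadjS : ∀ u v : TildeTVert (k+1), u ∈ S → v ∈ S → (tildeT (k+1)).Adj u v →
        ∃ i, u ∈ bagN P i ∧ v ∈ bagN P i := fun u v _ _ h => bagN_adj P u v h
    have hmem : ∀ a : Fin 3, a ≠ q → ∃ x ∈ S, x ∈ bagN P (t a) := by
      intro a ha
      have hne : (((P.bag (t a)).preimage (push a)
          (Set.injOn_of_injective (push_inj a))).image (push a)).Nonempty := by
        rw [← Finset.card_pos]
        have := (ht a).1
        omega
      obtain ⟨x, hx⟩ := hne
      obtain ⟨u, -, rfl⟩ := Finset.mem_image.1 hx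
      refine ⟨push a u, ?_, ?_⟩
      · change (push a u).1.head? ≠ some q
        simp only [hS, Set.mem_setOf_eq, push]
        simp only [List.head?_cons, ne_eq, Option.some.injEq]
        exact ha
      · rw [bagN_coe]
        exact (ht a).2 hx
    obtain ⟨y, hyS, hybag⟩ := Good.connected_interval hconn (bagN P) hadjS (bagN_convex P)
      (show ((t p : ℕ)) ≤ (t q : ℕ) from hle1) (show ((t q : ℕ)) ≤ (t r : ℕ) from hle2)
      (hmem p hpq) (hmem r (Ne.symm hqr))
    have hynot : y ∉ ((P.bag (t q)).preimage (push q)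
        (Set.injOn_of_injective (push_inj q))).image (push q) := by
      intro hy
      obtain ⟨u, -, rfl⟩ := Finset.mem_image.1 hy
      simp only [hS, Set.mem_setOf_eq, push, List.head?_cons] at hyS
      exact hyS rfl
    refine ⟨t q, ?_⟩
    have hsub2 : insert y (((P.bag (t q)).preimage (push q)
        (Set.injOn_of_injective (push_inj q))).image (push q)) ⊆ P.bag (t q) := by
      refine Finset.insert_subset ?_ (ht q).2
      rwa [bagN_coe] at hybag
    calc k + 1 + 2 ≤ (((P.bag (t q)).preimage (push q)
          (Set.injOn_of_injective (push_inj q))).image (push q)).card + 1 := by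
            have := (ht q).1; omega
      _ = (insert y (((P.bag (t q)).preimage (push q)
          (Set.injOn_of_injective (push_inj q))).image (push q))).card := by
            rw [Finset.card_insert_of_notMem hynot]
      _ ≤ (P.bag (t q)).card := Finset.card_le_card hsub2

end TT

namespace TT

open List SimpleGraph Good

variable {k : ℕ}

def allLists : ℕ → Finset (List (Fin 3))
  | 0 => {[]}
  | n+1 => {[]} ∪ (allLists n).biUnion fun l => Finset.univ.image fun a : Fin 3 => a :: l

lemma mem_allLists : ∀ (n : ℕ) (l : List (Fin 3)), l ∈ allLists n ↔ l.length ≤ n := by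
  intro n
  induction n with
  | zero =>
    intro l
    simp [allLists, List.length_eq_zero_iff]
  | succ n ih =>
    intro l
    simp only [allLists, Finset.mem_union, Finset.mem_singleton, Finset.mem_biUnion,
      Finset.mem_image, Finset.mem_univ, true_and]
    constructor
    · rintro (rfl | ⟨t, ht, a, rfl⟩)
      · simp
      · simp only [List.length_cons]
        have := (ih t).1 ht
        omega
    · intro hl
      cases l with
      | nil => exact Or.inl rfl
      | cons a t =>
        refine Or.inr ⟨t, (ih t).2 ?_, a, rfl⟩
        simp only [List.length_cons] at hl
        omega

noncomputable instance : Fintype (TildeTVert k) := by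
  unfold TildeTVert
  classical
  exact Fintype.subtype ((allLists (k+1)).filter
    (fun l => l.length ≤ k ∨ (l.length = k + 1 ∧ l.getLast? = some 0)))
    (by
      intro l
      rw [Finset.mem_filter, mem_allLists]
      constructor
      · exact fun h => h.2
      · intro h
        refine ⟨?_, h⟩
        rcases h with h | ⟨h, -⟩ <;> omega)

lemma width_le {V : Type*} {G : SimpleGraph V} (P : PathDecomp G) {c : ℕ}
    (h : ∀ i, (P.bag i).card ≤ c + 1) : P.width ≤ c := by
  have : (Finset.univ.sup fun i => (P.bag i).card) ≤ c + 1 :=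
    Finset.sup_le fun i _ => h i
  unfold PathDecomp.width
  omega

lemma pathwidth_le_of_decomp {W : Type*} {H : SimpleGraph W} (P : PathDecomp H) {c : ℕ}
    (h : ∀ i, (P.bag i).card ≤ c + 1) : pathwidth H ≤ c := by
  have h1 : pathwidth H ≤ P.width := Nat.sInf_le (Set.mem_setOf.mpr ⟨P, rfl⟩)
  exact h1.trans (width_le P h)

lemma exists_adjacent_vertex (v : TildeTVert k) : ∃ u, (tildeT k).Adj v u := by
  by_cases hv : v.1 = []
  · have hval : ([0] : List (Fin 3)).length ≤ k ∨
        (([0] : List (Fin 3)).length = k + 1 ∧ ([0] : List (Fin 3)).getLast? = some 0) := by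
      rcases Nat.eq_zero_or_pos k with rfl | hk
      · exact Or.inr ⟨rfl, rfl⟩
      · exact Or.inl (by simp; omega)
    refine ⟨(⟨[0], hval⟩ : TildeTVert k), ?_⟩
    refine adj_iff.2 ?_
    exact Or.inl ⟨0, by simp [hv]⟩
  · exact ⟨parent v, adj_parent hv⟩

lemma two_elem_adj {V : Type*} {G : SimpleGraph V} {S : Set V}
    (hconn : (G.induce S).Connected) {x y : V} (hx : x ∈ S) (hy : y ∈ S) (hxy : x ≠ y) :
    ∃ u v, u ∈ S ∧ v ∈ S ∧ G.Adj u v := by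
  obtain ⟨w⟩ := hconn.preconnected ⟨x, hx⟩ ⟨y, hy⟩
  cases w with
  | nil => exact absurd rfl hxy
  | cons h p =>
    rename_i b
    exact ⟨x, b, hx, b.2, by simpa [SimpleGraph.comap_adj] using h⟩

end TT

open TT Good in
/-- `𝕋̃^k` is a minor-minimal obstruction to pathwidth `k`: its pathwidth is
`k + 1` and every proper minor has pathwidth at most `k`. -/
theorem tildeT_isPWObstruction (k : ℕ) :
    pathwidth (tildeT k) = k + 1 ∧
      ∀ (W : Type) (H : SimpleGraph W), IsProperMinor H (tildeT k) → pathwidth H ≤ k := by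
  constructor
  · obtain ⟨bs, g, hne, hcard⟩ := TT.buildRootAll k
    apply le_antisymm
    · have h := g.pathwidth_le (c := k + 2) (fun B hB => (hcard B hB).1)
      simpa using h
    · refine le_csInf ⟨(Good.toPathDecomp g).width, Good.toPathDecomp g, rfl⟩ ?_
      rintro w ⟨P, rfl⟩
      obtain ⟨i, hi⟩ := TT.lower k P
      have hsup : k + 2 ≤ Finset.univ.sup fun j => (P.bag j).card :=
        le_trans hi (Finset.le_sup (f := fun j => (P.bag j).card) (Finset.mem_univ i))
      unfold PathDecomp.width
      omega
  · rintro W H ⟨⟨M⟩, hiso⟩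
    classical
    set V := TildeTVert k
    let f0 : W → TildeTVert k := fun w => (M.branch_nonempty w).choose
    have hf0 : ∀ w, f0 w ∈ M.branch w := fun w => (M.branch_nonempty w).choose_spec
    have hf0inj : Function.Injective f0 := by
      intro w w' h
      by_contra hne
      exact Set.disjoint_left.1 (M.branch_disjoint w w' hne) (hf0 w) (h ▸ hf0 w')
    haveI : Fintype W := Fintype.ofInjective f0 hf0inj
    by_cases hbig : ∃ w x y, x ∈ M.branch w ∧ y ∈ M.branch w ∧ x ≠ y
    · -- some branch set has at least two vertices: use a saturated decomposition
      obtain ⟨w0, x0, y0, hx0, hy0, hxy0⟩ := hbig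
      obtain ⟨u, v, huS, hvS, huv⟩ := TT.two_elem_adj (M.branch_connected w0) hx0 hy0 hxy0
      obtain ⟨bs, g, hcard⟩ := TT.sat k u v huv
      refine TT.pathwidth_le_of_decomp
        ({ n := bs.length
           bag := fun i => Finset.univ.filter (fun w => ∃ x ∈ M.branch w, x ∈ bs.getD (i:ℕ) ∅)
           mem_bag := ?_
           adj_bag := ?_
           convex := ?_ } : PathDecomp H) ?_
      · intro w
        obtain ⟨x, hx⟩ := M.branch_nonempty w
        obtain ⟨B, hB, hxB⟩ := g.cover x trivial
        obtain ⟨i, hi, rfl⟩ := Good.mem_getD hB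
        exact ⟨⟨i, hi⟩, Finset.mem_filter.2 ⟨Finset.mem_univ w, x, hx, hxB⟩⟩
      · intro w w' hww'
        obtain ⟨x, hx, y, hy, hadj⟩ := M.branch_adj w w' hww'
        obtain ⟨B, hB, hxB, hyB⟩ := g.adjbag x y trivial trivial hadj
        obtain ⟨i, hi, rfl⟩ := Good.mem_getD hB
        exact ⟨⟨i, hi⟩, Finset.mem_filter.2 ⟨Finset.mem_univ w, x, hx, hxB⟩,
          Finset.mem_filter.2 ⟨Finset.mem_univ w', y, hy, hyB⟩⟩
      · intro w i j l hij hjl hi hl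
        have h1 := (Finset.mem_filter.1 hi).2
        have h2 := (Finset.mem_filter.1 hl).2
        have key := Good.connected_interval (M.branch_connected w) (fun m => bs.getD m ∅)
          (fun a b _ _ hadj => by
            obtain ⟨B, hB, hab⟩ := g.adjbag a b trivial trivial hadj
            obtain ⟨m, hm, rfl⟩ := Good.mem_getD hB
            exact ⟨m, hab⟩)
          g.convex (show (i : ℕ) ≤ (j : ℕ) from hij) (show (j : ℕ) ≤ (l : ℕ) from hjl) h1 h2
        exact Finset.mem_filter.2 ⟨Finset.mem_univ w, key⟩
      · -- the width bound
        intro i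
        have hBmem : bs.getD (i : ℕ) ∅ ∈ bs := Good.getD_mem i.2
        set B := bs.getD (i : ℕ) ∅ with hBdef
        set T := Finset.univ.filter (fun w => ∃ x ∈ M.branch w, x ∈ B) with hT
        have hrepmem : ∀ w ∈ T, ∃ x, x ∈ M.branch w ∧ x ∈ B := by
          intro w hw
          obtain ⟨x, hx1, hx2⟩ := (Finset.mem_filter.1 hw).2
          exact ⟨x, hx1, hx2⟩
        let rep : W → TildeTVert k := fun w =>
          if h : ∃ x, x ∈ M.branch w ∧ x ∈ B then h.choose else TT.root k
        have hrep : ∀ w ∈ T, rep w ∈ M.branch w ∧ rep w ∈ B := by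
          intro w hw
          have h := hrepmem w hw
          simp only [rep, dif_pos h]
          exact h.choose_spec
        have hinj : Set.InjOn rep T := by
          intro w hw w' hw' heq
          by_contra hne
          exact Set.disjoint_left.1 (M.branch_disjoint w w' hne) (hrep w hw).1
            (heq ▸ (hrep w' hw').1)
        show T.card ≤ k + 1
        by_cases hc2 : B.card = k + 2
        · have huB : u ∈ B := ((hcard B hBmem).2 hc2).1
          have hvB : v ∈ B := ((hcard B hBmem).2 hc2).2
          have himg : ∀ w ∈ T, rep w ∈ insert (rep w0) (B \ {u, v}) := by
            intro w hw
            by_cases hww0 : w = w0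
            · subst hww0
              exact Finset.mem_insert_self _ _
            · refine Finset.mem_insert_of_mem (Finset.mem_sdiff.2 ⟨(hrep w hw).2, ?_⟩)
              intro hmem
              have hrw : rep w ∈ M.branch w0 := by
                rcases Finset.mem_insert.1 hmem with h | h
                · exact h ▸ huS
                · exact (Finset.mem_singleton.1 h) ▸ hvS
              exact Set.disjoint_left.1 (M.branch_disjoint w w0 hww0) (hrep w hw).1 hrw
          have hTcard : T.card ≤ (insert (rep w0) (B \ {u, v})).card :=
            Finset.card_le_card_of_injOn rep himg hinj
          have hsd : (B \ {u, v}).card = B.card - 2 := by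
            rw [Finset.card_sdiff_of_subset (by
              intro z hz
              rcases Finset.mem_insert.1 hz with rfl | hz
              · exact huB
              · exact (Finset.mem_singleton.1 hz) ▸ hvB)]
            congr 1
            rw [Finset.card_insert_of_notMem (by simpa using huv.ne), Finset.card_singleton]
          have hins : (insert (rep w0) (B \ {u, v})).card ≤ (B \ {u, v}).card + 1 :=
            Finset.card_insert_le _ _
          omega
        · have hble : B.card ≤ k + 1 := by
            have := (hcard B hBmem).1
            omega
          have hTcard : T.card ≤ B.card :=
            Finset.card_le_card_of_injOn rep (fun w hw => (hrep w hw).2) hinj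
          omega
    · -- all branch sets are singletons
      push_neg at hbig
      have hbr : ∀ w, ∀ x ∈ M.branch w, x = f0 w := fun w x hx => hbig w x (f0 w) hx (hf0 w)
      have hHadj : ∀ w w', H.Adj w w' → (tildeT k).Adj (f0 w) (f0 w') := by
        intro w w' h
        obtain ⟨x, hx, y, hy, hadj⟩ := M.branch_adj w w' h
        rwa [hbr w x hx, hbr w' y hy] at hadj
      by_cases hall : ∀ x y, (tildeT k).Adj x y →
          ∃ w w', H.Adj w w' ∧ f0 w = x ∧ f0 w' = y
      · -- every edge is realized: H is isomorphic to the tree, contradiction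
        exfalso
        have hsurj : Function.Surjective f0 := by
          intro v
          obtain ⟨z, hadj⟩ := TT.exists_adjacent_vertex v
          obtain ⟨w, w', -, hw, -⟩ := hall v z hadj
          exact ⟨w, hw⟩
        have hiso2 : H ≃g tildeT k := by
          refine ⟨Equiv.ofBijective f0 ⟨hf0inj, hsurj⟩, ?_⟩
          intro a b
          constructor
          · intro h
            obtain ⟨w, w', hww', hw, hw'⟩ := hall _ _ h
            have ha : w = a := hf0inj hw
            have hb : w' = b := hf0inj hw'
            rwa [ha, hb] at hww'
          · exact hHadj a b
        exact hiso.false hiso2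
      · -- some edge is not realized: use an edge-deleted decomposition
        push_neg at hall
        obtain ⟨x, y, hxy, hnreal⟩ := hall
        obtain ⟨bs, g, hcard⟩ := TT.del k x y hxy
        refine TT.pathwidth_le_of_decomp
          ({ n := bs.length
             bag := fun i => Finset.univ.filter (fun w => f0 w ∈ bs.getD (i:ℕ) ∅)
             mem_bag := ?_
             adj_bag := ?_
             convex := ?_ } : PathDecomp H) ?_
        · intro w
          obtain ⟨B, hB, hxB⟩ := g.cover (f0 w) trivial
          obtain ⟨i, hi, rfl⟩ := Good.mem_getD hB
          exact ⟨⟨i, hi⟩, Finset.mem_filter.2 ⟨Finset.mem_univ w, hxB⟩⟩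
        · intro w w' hww'
          have hdel : ((tildeT k).deleteEdges {s(x, y)}).Adj (f0 w) (f0 w') := by
            rw [SimpleGraph.deleteEdges_adj]
            refine ⟨hHadj w w' hww', ?_⟩
            simp only [Set.mem_singleton_iff]
            intro heq
            rcases Sym2.eq_iff.1 heq with ⟨h1, h2⟩ | ⟨h1, h2⟩
            · exact hnreal w w' hww' h1 h2
            · exact hnreal w' w hww'.symm h2 h1
          obtain ⟨B, hB, hxB, hyB⟩ := g.adjbag _ _ trivial trivial hdel
          obtain ⟨i, hi, rfl⟩ := Good.mem_getD hB
          exact ⟨⟨i, hi⟩, Finset.mem_filter.2 ⟨Finset.mem_univ w, hxB⟩,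
            Finset.mem_filter.2 ⟨Finset.mem_univ w', hyB⟩⟩
        · intro w i j l hij hjl hi hl
          have h1 := (Finset.mem_filter.1 hi).2
          have h2 := (Finset.mem_filter.1 hl).2
          exact Finset.mem_filter.2 ⟨Finset.mem_univ w,
            g.convex (f0 w) i j l (show (i:ℕ) ≤ (j:ℕ) from hij) (show (j:ℕ) ≤ (l:ℕ) from hjl)
              h1 h2⟩
        · intro i
          show (Finset.univ.filter (fun w => f0 w ∈ bs.getD (i:ℕ) ∅)).card ≤ k + 1
          have hBmem : bs.getD (i : ℕ) ∅ ∈ bs := Good.getD_mem i.2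
          have hble := hcard _ hBmem
          have hTcard : (Finset.univ.filter
              (fun w => f0 w ∈ bs.getD (i:ℕ) ∅)).card ≤ (bs.getD (i : ℕ) ∅).card :=
            Finset.card_le_card_of_injOn f0
              (fun w hw => (Finset.mem_filter.1 hw).2) (hf0inj.injOn)
          omega
end

section
/- Every graph G' obtained as the inflation of a graph G by k has a minimum-width path decomposition in which, for every v ∈ V(G), each bag either contains all k copies of v or none of them. -/
open SimpleGraph

theorem clique_bag {V : Type*} {G : SimpleGraph V} (P : PathDecomp G)
    (S : Finset V) (hS : S.Nonempty)
    (hadj : ∀ x ∈ S, ∀ y ∈ S, x ≠ y → G.Adj x y) :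
    ∃ i, ∀ x ∈ S, x ∈ P.bag i := by
  classical
  have hF : ∀ v : V, (Finset.univ.filter fun i => v ∈ P.bag i).Nonempty := by
    intro v
    obtain ⟨i, hi⟩ := P.mem_bag v
    exact ⟨i, by simp [hi]⟩
  set F : V → Fin P.n := fun v => (Finset.univ.filter fun i => v ∈ P.bag i).min' (hF v) with hFdef
  have hFmem : ∀ v, v ∈ P.bag (F v) := by
    intro v
    have := (Finset.univ.filter fun i => v ∈ P.bag i).min'_mem (hF v)
    simpa using this
  have hFle : ∀ v i, v ∈ P.bag i → F v ≤ i := by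
    intro v i hi
    exact Finset.min'_le _ _ (by simp [hi])
  obtain ⟨w, hwS, hw⟩ := S.exists_max_image F hS
  refine ⟨F w, ?_⟩
  intro x hx
  by_cases hxw : x = w
  · subst hxw; exact hFmem x
  · obtain ⟨m, hxm, hwm⟩ := P.adj_bag x w (hadj x hx w hwS hxw)
    exact P.convex x (F x) (F w) m (hw x hx) (hFle w m hwm) (hFmem x) hxm


/-- Every inflation `G ⋄ k` has a minimum-width path decomposition in which each
bag contains either all `k` copies of a vertex of `G` or none of them. -/
theorem inflate_min_width_decomp_uniform {V : Type*} [Fintype V]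
    (G : SimpleGraph V) (k : ℕ) :
    ∃ P : PathDecomp (inflate G k), P.width = pathwidth (inflate G k) ∧
      ∀ (v : V) (i : Fin P.n),
        (∀ j : Fin k, (v, j) ∈ P.bag i) ∨ (∀ j : Fin k, (v, j) ∉ P.bag i) := by
  classical
  have hne : {w | ∃ P : PathDecomp (inflate G k), P.width = w}.Nonempty := by
    refine ⟨_, ⟨⟨1, fun _ => Finset.univ, fun v => ⟨0, Finset.mem_univ v⟩,
      fun u v _ => ⟨0, Finset.mem_univ u, Finset.mem_univ v⟩,
      fun v i j l _ _ _ _ => Finset.mem_univ v⟩, rfl⟩⟩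
  obtain ⟨P, hP⟩ := Nat.sInf_mem hne
  have copies : ∀ (T : Finset V), T.Nonempty → k ≠ 0 →
      (∀ a ∈ T, ∀ b ∈ T, a ≠ b → G.Adj a b) →
      ∃ i, ∀ a ∈ T, ∀ j : Fin k, (a, j) ∈ P.bag i := by
    intro T hT hk hadjT
    obtain ⟨i, hi⟩ := clique_bag P (T ×ˢ (Finset.univ : Finset (Fin k)))
      (hT.product ⟨⟨0, Nat.pos_of_ne_zero hk⟩, Finset.mem_univ _⟩)
      (by
        rintro ⟨a, ja⟩ hx ⟨b, jb⟩ hy hxy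
        rw [Finset.mem_product] at hx hy
        rw [inflate, fromRel_adj]
        refine ⟨hxy, ?_⟩
        by_cases hab : a = b
        · exact Or.inl (Or.inl hab)
        · exact Or.inl (Or.inr (hadjT a hx.1 b hy.1 hab)))
    exact ⟨i, fun a ha j => hi (a, j) (Finset.mem_product.mpr ⟨ha, Finset.mem_univ j⟩)⟩
  set C : Fin P.n → Finset V :=
    fun i => Finset.univ.filter fun v => ∀ j : Fin k, (v, j) ∈ P.bag i with hC
  have hmemC : ∀ v i, v ∈ C i ↔ ∀ j : Fin k, (v, j) ∈ P.bag i := by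
    intro v i; simp [hC]
  have hQmem : ∀ x : V × Fin k, ∃ i, x ∈ (C i) ×ˢ (Finset.univ : Finset (Fin k)) := by
    rintro ⟨v, j⟩
    have hk : k ≠ 0 := by rintro rfl; exact j.elim0
    obtain ⟨i, hi⟩ := copies {v} ⟨v, Finset.mem_singleton_self v⟩ hk (by simp)
    exact ⟨i, Finset.mem_product.mpr ⟨(hmemC v i).mpr (hi v (Finset.mem_singleton_self v)),
      Finset.mem_univ j⟩⟩
  have hQadj : ∀ x y : V × Fin k, (inflate G k).Adj x y →
      ∃ i, x ∈ (C i) ×ˢ (Finset.univ : Finset (Fin k)) ∧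
        y ∈ (C i) ×ˢ (Finset.univ : Finset (Fin k)) := by
    rintro ⟨a, ja⟩ ⟨b, jb⟩ hadj
    have hk : k ≠ 0 := by rintro rfl; exact ja.elim0
    rw [inflate, fromRel_adj] at hadj
    have hab : a = b ∨ G.Adj a b := by
      rcases hadj.2 with (h | h) | (h | h)
      · exact Or.inl h
      · exact Or.inr h
      · exact Or.inl h.symm
      · exact Or.inr h.symm
    obtain ⟨i, hi⟩ := copies {a, b} ⟨a, by simp⟩ hk
      (by
        intro x hx y hy hxy
        simp only [Finset.mem_insert, Finset.mem_singleton] at hx hy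
        rcases hab with h | h
        · subst h
          rcases hx with rfl | rfl <;> rcases hy with rfl | rfl <;> simp_all
        · rcases hx with rfl | rfl <;> rcases hy with rfl | rfl <;>
            first | exact absurd rfl hxy | exact h | exact h.symm)
    exact ⟨i, Finset.mem_product.mpr ⟨(hmemC a i).mpr (hi a (by simp)), Finset.mem_univ _⟩,
      Finset.mem_product.mpr ⟨(hmemC b i).mpr (hi b (by simp)), Finset.mem_univ _⟩⟩
  have hQconv : ∀ x : V × Fin k, ∀ i j l : Fin P.n, i ≤ j → j ≤ l →
      x ∈ (C i) ×ˢ (Finset.univ : Finset (Fin k)) →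
      x ∈ (C l) ×ˢ (Finset.univ : Finset (Fin k)) →
      x ∈ (C j) ×ˢ (Finset.univ : Finset (Fin k)) := by
    rintro ⟨v, j⟩ i₁ i₂ i₃ h12 h23 h1 h3
    rw [Finset.mem_product] at h1 h3 ⊢
    refine ⟨(hmemC v i₂).mpr fun j' => ?_, Finset.mem_univ j⟩
    exact P.convex (v, j') i₁ i₂ i₃ h12 h23 ((hmemC v i₁).mp h1.1 j') ((hmemC v i₃).mp h3.1 j')
  set Q : PathDecomp (inflate G k) :=
    ⟨P.n, fun i => (C i) ×ˢ (Finset.univ : Finset (Fin k)), hQmem, hQadj, hQconv⟩ with hQ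
  refine ⟨Q, ?_, ?_⟩
  · refine le_antisymm ?_ (Nat.sInf_le ⟨Q, rfl⟩)
    calc Q.width ≤ P.width := by
          apply Nat.sub_le_sub_right
          apply Finset.sup_mono_fun
          intro i _
          apply Finset.card_le_card
          intro x hx
          have hx' : x ∈ C i ×ˢ (Finset.univ : Finset (Fin k)) := hx
          rw [Finset.mem_product] at hx'
          exact (hmemC x.1 i).mp hx'.1 x.2
      _ = pathwidth (inflate G k) := hP
  · intro v i
    by_cases h : v ∈ C i
    · exact Or.inl fun j => Finset.mem_product.mpr ⟨h, Finset.mem_univ j⟩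
    · exact Or.inr fun j hj => h (Finset.mem_product.mp hj).1
end
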